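/- arXiv:1112.4309 — 9 statements merged into one kernel-verified Lean document; each statement's English description precedes it below -/
import Mathlib

section
/- Let c₁ ≥ c₂ ≥ 0 and c₃ be real numbers and suppose that c₃ ≠ 0 or c₂ > 0. Then the function φ_c : ℝ → ℝ is infinitely differentiable (C^∞), and moreover φ_c(t) + c₂ > 0 for every t ∈ ℝ; consequently ψ_c(t) := √(φ_c(t) + c₁)·√(φ_c(t) + c₂) > 0 for every t ∈ ℝ. -/
private lemma cubic_strictMonoOn (c₁ c₂ : ℝ) (h₁ : c₂ ≤ c₁) (h₂ : 0 ≤ c₂) :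
    StrictMonoOn (fun x : ℝ => (x + c₁) * (x + c₂) * x) (Set.Ici 0) := by
  intro a ha b hb hab
  simp only [Set.mem_Ici] at ha hb
  dsimp only
  have hb0 : 0 < b := ha.trans_lt hab
  calc (a + c₁) * (a + c₂) * a ≤ (b + c₁) * (b + c₂) * a := by
        apply mul_le_mul_of_nonneg_right _ ha
        apply mul_le_mul (by linarith) (by linarith) (by linarith) (by linarith)
    _ < (b + c₁) * (b + c₂) * b := by
        apply mul_lt_mul_of_pos_left hab
        exact mul_pos (by linarith) (by linarith)

/-- Let `c₁ ≥ c₂ ≥ 0` and `c₃` be reals with `c₃ ≠ 0` or `c₂ > 0`.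
If `φ : ℝ → ℝ` is the function assigning to `t` the unique `x ≥ 0` with
`(x + c₁)(x + c₂)x = t² + c₃²` (expressed here by the defining property `hφ`), then
`φ` is `C^∞`, `φ t + c₂ > 0` for all `t`, and consequently
`ψ(t) = √(φ t + c₁)·√(φ t + c₂) > 0` for all `t`. -/
theorem phi_smooth_and_positive (c₁ c₂ c₃ : ℝ) (h₁ : c₂ ≤ c₁) (h₂ : 0 ≤ c₂)
    (h₃ : c₃ ≠ 0 ∨ 0 < c₂) (φ : ℝ → ℝ)
    (hφ : ∀ t, 0 ≤ φ t ∧ (φ t + c₁) * (φ t + c₂) * φ t = t ^ 2 + c₃ ^ 2) :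
    ContDiff ℝ (⊤ : ℕ∞) φ ∧ (∀ t, 0 < φ t + c₂) ∧
      ∀ t, 0 < Real.sqrt (φ t + c₁) * Real.sqrt (φ t + c₂) := by
  set P : ℝ → ℝ := fun x => (x + c₁) * (x + c₂) * x with hP
  -- key positivity
  have hpos : ∀ t, 0 < φ t + c₂ := by
    intro t
    rcases h₃ with h₃ | h₃
    · rcases lt_or_eq_of_le (hφ t).1 with h | h
      · linarith
      · exfalso
        have := (hφ t).2
        rw [← h] at this
        have hc : 0 < c₃ ^ 2 := lt_of_le_of_ne (sq_nonneg c₃) (Ne.symm (pow_ne_zero 2 h₃))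
        nlinarith [sq_nonneg t]
    · linarith [(hφ t).1]
  have hpos1 : ∀ t, 0 < φ t + c₁ := fun t => lt_of_lt_of_le (hpos t) (by linarith)
  -- uniqueness of nonneg root
  have huniq : ∀ x t, 0 ≤ x → P x = t ^ 2 + c₃ ^ 2 → x = φ t := by
    intro x t hx hPx
    have := (hφ t).2
    exact (cubic_strictMonoOn c₁ c₂ h₁ h₂).injOn hx (hφ t).1 (hPx.trans this.symm)
  -- smoothness of P
  have hPsmooth : ContDiff ℝ (⊤ : ℕ∞) P := by
    apply ContDiff.mul
    apply ContDiff.mul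
    · exact contDiff_id.add contDiff_const
    · exact contDiff_id.add contDiff_const
    · exact contDiff_id
  have hsmooth : ContDiff ℝ (⊤ : ℕ∞) φ := by
    rw [contDiff_iff_contDiffAt]
    intro t₀
    set x₀ := φ t₀ with hx₀
    have hx2 : 0 < x₀ + c₂ := hpos t₀
    have hx1 : 0 < x₀ + c₁ := hpos1 t₀
    have hx0 : 0 ≤ x₀ := (hφ t₀).1
    set p' : ℝ := ((x₀ + c₂) + (x₀ + c₁)) * x₀ + (x₀ + c₁) * (x₀ + c₂) with hp'def
    have hp' : p' ≠ 0 := by positivity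
    have hd : HasDerivAt P p' x₀ := by
      have : HasDerivAt P ((1 * (x₀ + c₂) + (x₀ + c₁) * 1) * x₀ + (x₀ + c₁) * (x₀ + c₂) * 1) x₀ :=
        (((hasDerivAt_id x₀).add_const c₁).mul ((hasDerivAt_id x₀).add_const c₂)).mul
          (hasDerivAt_id x₀)
      convert this using 1
      ring
    have hPat : ContDiffAt ℝ (⊤ : ℕ∞) P x₀ := hPsmooth.contDiffAt
    have hfd : HasFDerivAt P
        (↑(ContinuousLinearEquiv.unitsEquivAut ℝ (Units.mk0 p' hp')) : ℝ →L[ℝ] ℝ) x₀ :=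
      hd.hasFDerivAt_equiv hp'
    have hn : ((⊤ : ℕ∞) : WithTop ℕ∞) ≠ 0 := by simp
    set g := hPat.localInverse hfd hn with hg
    have hgsmooth : ContDiffAt ℝ (⊤ : ℕ∞) g (P x₀) := hPat.to_localInverse hfd hn
    have hstrict := hPat.hasStrictFDerivAt' hfd hn
    have hright : ∀ᶠ y in nhds (P x₀), P (g y) = y :=
      hstrict.eventually_right_inverse
    have hgcont : ContinuousAt g (P x₀) := hstrict.localInverse_continuousAt
    have hgP : g (P x₀) = x₀ := hPat.localInverse_apply_image hfd hn
    -- q t = t² + c₃²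
    have hq : Continuous fun t : ℝ => t ^ 2 + c₃ ^ 2 := (continuous_pow 2).add continuous_const
    have hqt₀ : t₀ ^ 2 + c₃ ^ 2 = P x₀ := ((hφ t₀).2).symm
    have hcomp : ContinuousAt (fun t => g (t ^ 2 + c₃ ^ 2)) t₀ :=
      ContinuousAt.comp (by rw [hqt₀]; exact hgcont) hq.continuousAt
    have hval : g (t₀ ^ 2 + c₃ ^ 2) = x₀ := by rw [hqt₀]; exact hgP
    have htend : Filter.Tendsto (fun t => g (t ^ 2 + c₃ ^ 2)) (nhds t₀) (nhds x₀) := by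
      have := hcomp.tendsto
      rwa [hval] at this
    -- eventually g (q t) > -c₂
    have hev1 : ∀ᶠ t in nhds t₀, -c₂ < g (t ^ 2 + c₃ ^ 2) :=
      htend.eventually (eventually_gt_nhds (by linarith : -c₂ < x₀))
    have hev2 : ∀ᶠ t in nhds t₀, P (g (t ^ 2 + c₃ ^ 2)) = t ^ 2 + c₃ ^ 2 := by
      have := hq.continuousAt (x := t₀)
      rw [ContinuousAt, hqt₀] at this
      exact this.eventually hright
    have heq : ∀ᶠ t in nhds t₀, φ t = g (t ^ 2 + c₃ ^ 2) := by
      filter_upwards [hev1, hev2] with t h1 h2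
      set x := g (t ^ 2 + c₃ ^ 2) with hx
      have hxc2 : 0 < x + c₂ := by linarith
      have hxc1 : 0 < x + c₁ := by linarith
      have hx0 : 0 ≤ x := by
        by_contra hneg
        push_neg at hneg
        have : P x < 0 := by
          simp only [hP]
          exact mul_neg_of_pos_of_neg (mul_pos hxc1 hxc2) hneg
        nlinarith [sq_nonneg t, sq_nonneg c₃]
      exact (huniq x t hx0 h2).symm
    have : ContDiffAt ℝ (⊤ : ℕ∞) (fun t => g (t ^ 2 + c₃ ^ 2)) t₀ := by
      apply ContDiffAt.comp
      · rw [hqt₀]; exact hgsmooth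
      · exact ((contDiff_id.pow 2).add contDiff_const).contDiffAt
    exact this.congr_of_eventuallyEq heq
  refine ⟨hsmooth, hpos, fun t => ?_⟩
  exact mul_pos (Real.sqrt_pos.2 (hpos1 t)) (Real.sqrt_pos.2 (hpos t))
end

section
/- Let c₁ ≥ c₂ ≥ 0 and c₃ be real numbers with c₃ ≠ 0 or c₂ > 0, and let c = (c₁, c₂, c₃). Then for every t ∈ ℝ and all u, v ∈ S¹, the point Φ_c(t, u, v) lies in F⁻¹(c), i.e. F(Φ_c(t, u, v)) = (c₁, c₂, c₃). -/
open Complex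

/-- The Harvey–Lawson fibration `F : ℂ³ → ℝ³`,
`F(z₁,z₂,z₃) = (|z₁|² − |z₃|², |z₂|² − |z₃|², Im(z₁z₂z₃))`. -/
noncomputable def HLfib (z : ℂ × ℂ × ℂ) : ℝ × ℝ × ℝ :=
  (normSq z.1 - normSq z.2.2, normSq z.2.1 - normSq z.2.2, (z.1 * z.2.1 * z.2.2).im)

/-- For `c₁ ≥ c₂ ≥ 0` and `c₃` with `c₃ ≠ 0` or `c₂ > 0`, and `φ = φ_c`
the unique-root function (expressed by its defining property `hφ`), the point
`Φ_c(t,u,v) = (√(φ t + c₁)·u, √(φ t + c₂)·v, (t + i c₃)/(ψ_c(t)·u·v))` lies in the fibre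
`F⁻¹(c₁,c₂,c₃)` for every `t ∈ ℝ` and all `u, v` on the unit circle. -/
theorem point_in_fibre (c₁ c₂ c₃ : ℝ) (h₁ : c₂ ≤ c₁) (h₂ : 0 ≤ c₂)
    (h₃ : c₃ ≠ 0 ∨ 0 < c₂) (φ : ℝ → ℝ)
    (hφ : ∀ t, 0 ≤ φ t ∧ (φ t + c₁) * (φ t + c₂) * φ t = t ^ 2 + c₃ ^ 2)
    (t : ℝ) (u v : ℂ) (hu : ‖u‖ = 1) (hv : ‖v‖ = 1) :
    HLfib ((Real.sqrt (φ t + c₁) : ℂ) * u, (Real.sqrt (φ t + c₂) : ℂ) * v,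
        ((t : ℂ) + (c₃ : ℂ) * Complex.I) /
          (((Real.sqrt (φ t + c₁) * Real.sqrt (φ t + c₂) : ℝ) : ℂ) * u * v))
      = (c₁, c₂, c₃) := by
  obtain ⟨hx0, heq⟩ := hφ t
  set x := φ t with hxdef
  -- positivity of (x+c₁) and (x+c₂)
  have h2pos : 0 < x + c₂ := by
    rcases h₃ with h | h
    · have hne : (0:ℝ) < t ^ 2 + c₃ ^ 2 := by positivity
      by_contra hcon
      push_neg at hcon
      have hx : x = 0 := le_antisymm (by linarith) hx0
      rw [hx] at heq
      nlinarith
    · linarith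
  have h1pos : 0 < x + c₁ := by linarith
  have ha : Real.sqrt (x + c₁) ^ 2 = x + c₁ := Real.sq_sqrt h1pos.le
  have hb : Real.sqrt (x + c₂) ^ 2 = x + c₂ := Real.sq_sqrt h2pos.le
  have hapos : 0 < Real.sqrt (x + c₁) := Real.sqrt_pos.mpr h1pos
  have hbpos : 0 < Real.sqrt (x + c₂) := Real.sqrt_pos.mpr h2pos
  have hu0 : u ≠ 0 := by intro h; rw [h] at hu; simp at hu
  have hv0 : v ≠ 0 := by intro h; rw [h] at hv; simp at hv
  have haC : ((Real.sqrt (x + c₁) : ℝ) : ℂ) ≠ 0 := by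
    exact_mod_cast hapos.ne'
  have hbC : ((Real.sqrt (x + c₂) : ℝ) : ℂ) ≠ 0 := by
    exact_mod_cast hbpos.ne'
  have hnsu : normSq u = 1 := by
    rw [normSq_eq_norm_sq, hu]; norm_num
  have hnsv : normSq v = 1 := by
    rw [normSq_eq_norm_sq, hv]; norm_num
  -- the product z₁ z₂ z₃ equals t + i c₃
  have hprod : ((Real.sqrt (x + c₁) : ℂ) * u) * ((Real.sqrt (x + c₂) : ℂ) * v) *
      (((t : ℂ) + (c₃ : ℂ) * Complex.I) /
        (((Real.sqrt (x + c₁) * Real.sqrt (x + c₂) : ℝ) : ℂ) * u * v))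
      = (t : ℂ) + (c₃ : ℂ) * Complex.I := by
    push_cast
    field_simp
  have hns3 : normSq (((t : ℂ) + (c₃ : ℂ) * Complex.I) /
      (((Real.sqrt (x + c₁) * Real.sqrt (x + c₂) : ℝ) : ℂ) * u * v)) = x := by
    rw [normSq_div]
    have hnum : normSq ((t : ℂ) + (c₃ : ℂ) * Complex.I) = t ^ 2 + c₃ ^ 2 := by
      simp [normSq_apply]; ring
    have hden : normSq (((Real.sqrt (x + c₁) * Real.sqrt (x + c₂) : ℝ) : ℂ) * u * v)
        = (x + c₁) * (x + c₂) := by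
      rw [normSq_mul, normSq_mul, hnsu, hnsv, normSq_ofReal]
      have : (Real.sqrt (x + c₁) * Real.sqrt (x + c₂)) *
          (Real.sqrt (x + c₁) * Real.sqrt (x + c₂)) = (x + c₁) * (x + c₂) := by
        nlinarith [ha, hb]
      rw [this]; ring
    rw [hnum, hden, ← heq]
    field_simp
  have hns1 : normSq ((Real.sqrt (x + c₁) : ℂ) * u) = x + c₁ := by
    rw [normSq_mul, hnsu, normSq_ofReal]; nlinarith [ha]
  have hns2 : normSq ((Real.sqrt (x + c₂) : ℂ) * v) = x + c₂ := by
    rw [normSq_mul, hnsv, normSq_ofReal]; nlinarith [hb]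
  simp only [HLfib, hprod, hns1, hns2, hns3, Prod.mk.injEq]
  refine ⟨by ring, by ring, by simp⟩
end

section
/- Let c₁ ≥ c₂ ≥ 0 and c₃ be real numbers with c₃ ≠ 0 or c₂ > 0, and let c = (c₁, c₂, c₃). Then Φ_c is a homeomorphism from ℝ × S¹ × S¹ onto the fibre F⁻¹(c) (with its subspace topology from ℂ³). In particular, F⁻¹(c) is homeomorphic to ℝ × S¹ × S¹. -/
open Complex
open scoped NNReal

/-- The parametrization `Φ_c : ℝ × S¹ × S¹ → ℂ³` of the fibre `F⁻¹(c)`. -/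
noncomputable def PhiHL (c₁ c₂ c₃ : ℝ) (φ : ℝ → ℝ)
    (p : ℝ × ↥(Metric.sphere (0 : ℂ) 1) × ↥(Metric.sphere (0 : ℂ) 1)) : ℂ × ℂ × ℂ :=
  ((Real.sqrt (φ p.1 + c₁) : ℂ) * (p.2.1 : ℂ), (Real.sqrt (φ p.1 + c₂) : ℂ) * (p.2.2 : ℂ),
    ((p.1 : ℂ) + (c₃ : ℂ) * Complex.I) /
      (((Real.sqrt (φ p.1 + c₁) * Real.sqrt (φ p.1 + c₂) : ℝ) : ℂ) * (p.2.1 : ℂ) * (p.2.2 : ℂ)))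

/- ### Auxiliary lemmas -/

lemma HL_cubic_strictMonoOn {c₁ c₂ : ℝ} (h₁ : c₂ ≤ c₁) (h₂ : 0 ≤ c₂) :
    StrictMonoOn (fun x : ℝ => (x + c₁) * (x + c₂) * x) (Set.Ici 0) := by
  intro a ha b hb hab
  simp only [Set.mem_Ici] at ha hb
  have hc₁ : 0 ≤ c₁ := h₂.trans h₁
  have hb0 : 0 < b := ha.trans_lt hab
  have h5 : 0 < (b + c₁) * (b + c₂) := mul_pos (by linarith) (by linarith)
  have h6 : (a + c₁) * (a + c₂) ≤ (b + c₁) * (b + c₂) := by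
    nlinarith [mul_nonneg (sub_nonneg.2 hab.le) (show (0:ℝ) ≤ b + a + c₁ + c₂ by linarith)]
  calc (a + c₁) * (a + c₂) * a ≤ (b + c₁) * (b + c₂) * a :=
        mul_le_mul_of_nonneg_right h6 ha
    _ < (b + c₁) * (b + c₂) * b := by
        exact mul_lt_mul_of_pos_left hab h5

lemma HL_phi_unique {c₁ c₂ c₃ : ℝ} (h₁ : c₂ ≤ c₁) (h₂ : 0 ≤ c₂) {φ : ℝ → ℝ}
    (hφ : ∀ t, 0 ≤ φ t ∧ (φ t + c₁) * (φ t + c₂) * φ t = t ^ 2 + c₃ ^ 2)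
    {t x : ℝ} (hx : 0 ≤ x) (heq : (x + c₁) * (x + c₂) * x = t ^ 2 + c₃ ^ 2) :
    x = φ t := by
  have := (HL_cubic_strictMonoOn h₁ h₂).injOn
  exact this (Set.mem_Ici.2 hx) (Set.mem_Ici.2 (hφ t).1) (by
    simp only
    rw [heq, (hφ t).2])

lemma HL_phi_pos {c₁ c₂ c₃ : ℝ} (h₁ : c₂ ≤ c₁) (h₂ : 0 ≤ c₂) (h₃ : c₃ ≠ 0 ∨ 0 < c₂)
    {φ : ℝ → ℝ}
    (hφ : ∀ t, 0 ≤ φ t ∧ (φ t + c₁) * (φ t + c₂) * φ t = t ^ 2 + c₃ ^ 2) (t : ℝ) :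
    0 < φ t + c₂ := by
  rcases h₃ with h | h
  · have h3 : 0 < t ^ 2 + c₃ ^ 2 := by positivity
    rw [← (hφ t).2] at h3
    have h0 := (hφ t).1
    by_contra hcon
    push_neg at hcon
    have hφ0 : φ t = 0 := le_antisymm (by linarith) h0
    have hc2 : c₂ = 0 := le_antisymm (by linarith) h₂
    rw [hφ0, hc2] at h3
    simp at h3
  · have := (hφ t).1; linarith

lemma HL_phi_continuous {c₁ c₂ c₃ : ℝ} (h₁ : c₂ ≤ c₁) (h₂ : 0 ≤ c₂) {φ : ℝ → ℝ}
    (hφ : ∀ t, 0 ≤ φ t ∧ (φ t + c₁) * (φ t + c₂) * φ t = t ^ 2 + c₃ ^ 2) :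
    Continuous φ := by
  have hc₁ : 0 ≤ c₁ := h₂.trans h₁
  set C₁ : ℝ≥0 := Real.toNNReal c₁ with hC₁def
  set C₂ : ℝ≥0 := Real.toNNReal c₂ with hC₂def
  have hC₁ : (C₁ : ℝ) = c₁ := Real.coe_toNNReal _ hc₁
  have hC₂ : (C₂ : ℝ) = c₂ := Real.coe_toNNReal _ h₂
  set g : ℝ≥0 → ℝ≥0 := fun x => (x + C₁) * (x + C₂) * x with hgdef
  have hgc : ∀ x : ℝ≥0, ((g x : ℝ≥0) : ℝ) = ((x : ℝ) + c₁) * ((x : ℝ) + c₂) * (x : ℝ) := by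
    intro x; simp [hgdef, hC₁, hC₂]
  have hmono : StrictMono g := by
    intro a b hab
    rw [← NNReal.coe_lt_coe] at hab ⊢
    rw [hgc, hgc]
    exact HL_cubic_strictMonoOn h₁ h₂ (Set.mem_Ici.2 a.2) (Set.mem_Ici.2 b.2) hab
  have hgcont : Continuous g := by
    simp only [hgdef]; fun_prop
  have hsurj : Function.Surjective g := by
    intro y
    have h0 : g 0 = 0 := by simp [hgdef]
    have hy : y ≤ g (y + 1) := by
      have h1 : (1 : ℝ≥0) ≤ y + 1 + C₁ := le_add_self.trans le_self_add
      have h2 : (1 : ℝ≥0) ≤ y + 1 + C₂ := le_add_self.trans le_self_add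
      calc y ≤ y + 1 := le_self_add
        _ = 1 * 1 * (y + 1) := by ring
        _ ≤ (y + 1 + C₁) * (y + 1 + C₂) * (y + 1) := by
            exact mul_le_mul' (mul_le_mul' h1 h2) le_rfl
    obtain ⟨x, -, hx⟩ := intermediate_value_Icc (zero_le : (0:ℝ≥0) ≤ y + 1) hgcont.continuousOn
      ⟨by simp [h0], hy⟩
    exact ⟨x, hx⟩
  set e : ℝ≥0 ≃o ℝ≥0 := StrictMono.orderIsoOfSurjective g hmono hsurj with hedef
  have hee : ∀ x, e x = g x := fun x => rfl
  have key : ∀ t, φ t = ((e.symm ((t ^ 2 + c₃ ^ 2).toNNReal) : ℝ≥0) : ℝ) := by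
    intro t
    have hxn : 0 ≤ φ t := (hφ t).1
    set x : ℝ≥0 := ⟨φ t, hxn⟩ with hxdef
    have hex : e x = (t ^ 2 + c₃ ^ 2).toNNReal := by
      apply NNReal.coe_injective
      rw [hee, hgc, Real.coe_toNNReal _ (by positivity)]
      exact (hφ t).2
    have : x = e.symm ((t ^ 2 + c₃ ^ 2).toNNReal) := by
      rw [← hex, OrderIso.symm_apply_apply]
    rw [← this]
    rfl
  rw [show φ = fun t => ((e.symm ((t ^ 2 + c₃ ^ 2).toNNReal) : ℝ≥0) : ℝ) from funext key]
  exact NNReal.continuous_coe.comp (e.symm.continuous.comp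
    (continuous_real_toNNReal.comp (by fun_prop)))

lemma HL_sphere_norm (u : ↥(Metric.sphere (0 : ℂ) 1)) : ‖(u : ℂ)‖ = 1 := by
  have := u.2; simpa using this

lemma HL_sphere_ne (u : ↥(Metric.sphere (0 : ℂ) 1)) : (u : ℂ) ≠ 0 := by
  intro h
  have := HL_sphere_norm u
  rw [h] at this; simp at this

lemma HL_sphere_normSq (u : ↥(Metric.sphere (0 : ℂ) 1)) : normSq (u : ℂ) = 1 := by
  rw [Complex.normSq_eq_norm_sq, HL_sphere_norm]; norm_num

/-- For `c₁ ≥ c₂ ≥ 0` and `c₃` with `c₃ ≠ 0` or `c₂ > 0`, the map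
`Φ_c` is a homeomorphism from `ℝ × S¹ × S¹` onto the fibre `F⁻¹(c)` (with its subspace
topology); i.e. it is a topological embedding with range exactly the fibre.  In
particular the fibre is homeomorphic to `ℝ × S¹ × S¹`. -/
theorem fibre_homeomorph (c₁ c₂ c₃ : ℝ) (h₁ : c₂ ≤ c₁) (h₂ : 0 ≤ c₂)
    (h₃ : c₃ ≠ 0 ∨ 0 < c₂) (φ : ℝ → ℝ)
    (hφ : ∀ t, 0 ≤ φ t ∧ (φ t + c₁) * (φ t + c₂) * φ t = t ^ 2 + c₃ ^ 2) :
    Topology.IsEmbedding (PhiHL c₁ c₂ c₃ φ) ∧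
    Set.range (PhiHL c₁ c₂ c₃ φ) = HLfib ⁻¹' {(c₁, c₂, c₃)} ∧
    Nonempty ((ℝ × ↥(Metric.sphere (0 : ℂ) 1) × ↥(Metric.sphere (0 : ℂ) 1)) ≃ₜ
      ↥(HLfib ⁻¹' {(c₁, c₂, c₃)})) := by
  have hc₁ : 0 ≤ c₁ := h₂.trans h₁
  have hpos2 : ∀ t, 0 < φ t + c₂ := HL_phi_pos h₁ h₂ h₃ hφ
  have hpos1 : ∀ t, 0 < φ t + c₁ := fun t => lt_of_lt_of_le (hpos2 t) (by linarith)
  have hs1 : ∀ t, 0 < Real.sqrt (φ t + c₁) := fun t => Real.sqrt_pos.2 (hpos1 t)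
  have hs2 : ∀ t, 0 < Real.sqrt (φ t + c₂) := fun t => Real.sqrt_pos.2 (hpos2 t)
  have hsq1 : ∀ t, Real.sqrt (φ t + c₁) ^ 2 = φ t + c₁ :=
    fun t => Real.sq_sqrt (hpos1 t).le
  have hsq2 : ∀ t, Real.sqrt (φ t + c₂) ^ 2 = φ t + c₂ :=
    fun t => Real.sq_sqrt (hpos2 t).le
  have hφcont : Continuous φ := HL_phi_continuous h₁ h₂ hφ
  -- the product identity
  have hprod : ∀ p : ℝ × ↥(Metric.sphere (0 : ℂ) 1) × ↥(Metric.sphere (0 : ℂ) 1),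
      (PhiHL c₁ c₂ c₃ φ p).1 * (PhiHL c₁ c₂ c₃ φ p).2.1 * (PhiHL c₁ c₂ c₃ φ p).2.2 =
        (p.1 : ℂ) + (c₃ : ℂ) * Complex.I := by
    rintro ⟨t, u, v⟩
    simp only [PhiHL]
    have hu := HL_sphere_ne u
    have hv := HL_sphere_ne v
    have ha : ((Real.sqrt (φ t + c₁) : ℝ) : ℂ) ≠ 0 := by
      exact_mod_cast Complex.ofReal_ne_zero.2 (hs1 t).ne'
    have hb : ((Real.sqrt (φ t + c₂) : ℝ) : ℂ) ≠ 0 := by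
      exact_mod_cast Complex.ofReal_ne_zero.2 (hs2 t).ne'
    push_cast
    field_simp
  -- continuity of Φ
  have hΦcont : Continuous (PhiHL c₁ c₂ c₃ φ) := by
    unfold PhiHL
    have h1 : Continuous fun p : ℝ × ↥(Metric.sphere (0 : ℂ) 1) × ↥(Metric.sphere (0 : ℂ) 1) =>
        ((Real.sqrt (φ p.1 + c₁) : ℝ) : ℂ) := by fun_prop
    have h2 : Continuous fun p : ℝ × ↥(Metric.sphere (0 : ℂ) 1) × ↥(Metric.sphere (0 : ℂ) 1) =>
        ((Real.sqrt (φ p.1 + c₂) : ℝ) : ℂ) := by fun_prop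
    have hu : Continuous fun p : ℝ × ↥(Metric.sphere (0 : ℂ) 1) × ↥(Metric.sphere (0 : ℂ) 1) =>
        (p.2.1 : ℂ) := by fun_prop
    have hv : Continuous fun p : ℝ × ↥(Metric.sphere (0 : ℂ) 1) × ↥(Metric.sphere (0 : ℂ) 1) =>
        (p.2.2 : ℂ) := by fun_prop
    refine Continuous.prodMk (h1.mul hu) (Continuous.prodMk (h2.mul hv) ?_)
    refine Continuous.div (by fun_prop) (by fun_prop) ?_
    rintro ⟨t, u, v⟩
    simp only
    refine mul_ne_zero (mul_ne_zero ?_ (HL_sphere_ne u)) (HL_sphere_ne v)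
    exact Complex.ofReal_ne_zero.2 (mul_pos (hs1 t) (hs2 t)).ne'
  -- the range is the fibre
  have hrange : Set.range (PhiHL c₁ c₂ c₃ φ) = HLfib ⁻¹' {(c₁, c₂, c₃)} := by
    ext z
    constructor
    · rintro ⟨⟨t, u, v⟩, rfl⟩
      have hz := hprod (t, u, v)
      simp only [PhiHL] at hz ⊢
      simp only [Set.mem_preimage, Set.mem_singleton_iff, HLfib]
      have hnu := HL_sphere_normSq u
      have hnv := HL_sphere_normSq v
      have hq1 : normSq ((Real.sqrt (φ t + c₁) : ℂ) * (u : ℂ)) = φ t + c₁ := by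
        rw [Complex.normSq_mul, hnu, Complex.normSq_ofReal, mul_one, ← sq, hsq1]
      have hq2 : normSq ((Real.sqrt (φ t + c₂) : ℂ) * (v : ℂ)) = φ t + c₂ := by
        rw [Complex.normSq_mul, hnv, Complex.normSq_ofReal, mul_one, ← sq, hsq2]
      have hq3 : normSq (((t : ℂ) + (c₃ : ℂ) * Complex.I) /
          (((Real.sqrt (φ t + c₁) * Real.sqrt (φ t + c₂) : ℝ) : ℂ) * (u : ℂ) * (v : ℂ)))
          = φ t := by
        rw [Complex.normSq_div, Complex.normSq_mul, Complex.normSq_mul, hnu, hnv,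
          Complex.normSq_ofReal]
        have hnum : normSq ((t : ℂ) + (c₃ : ℂ) * Complex.I) = t ^ 2 + c₃ ^ 2 := by
          simp [Complex.normSq_apply]; ring
        have hd : Real.sqrt (φ t + c₁) * Real.sqrt (φ t + c₂) *
            (Real.sqrt (φ t + c₁) * Real.sqrt (φ t + c₂)) = (φ t + c₁) * (φ t + c₂) := by
          nlinarith [hsq1 t, hsq2 t]
        rw [hnum, hd, mul_one, mul_one,
          div_eq_iff (mul_pos (hpos1 t) (hpos2 t)).ne']
        rw [← (hφ t).2]
        ring
      rw [Prod.ext_iff, Prod.ext_iff]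
      refine ⟨?_, ?_, ?_⟩
      · show normSq _ - normSq _ = c₁
        rw [hq1, hq3]; ring
      · show normSq _ - normSq _ = c₂
        rw [hq2, hq3]; ring
      · rw [hz]; simp
    · intro hz
      simp only [Set.mem_preimage, Set.mem_singleton_iff, HLfib, Prod.ext_iff] at hz
      obtain ⟨hz1, hz2, hz3⟩ := hz
      obtain ⟨z₁, z₂, z₃⟩ := z
      simp only at hz1 hz2 hz3
      set x : ℝ := normSq z₃ with hxdef
      have hx0 : 0 ≤ x := normSq_nonneg _
      have h1 : normSq z₁ = x + c₁ := by linarith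
      have h2 : normSq z₂ = x + c₂ := by linarith
      set t : ℝ := (z₁ * z₂ * z₃).re with htdef
      have hcube : (x + c₁) * (x + c₂) * x = t ^ 2 + c₃ ^ 2 := by
        have : normSq (z₁ * z₂ * z₃) = (x + c₁) * (x + c₂) * x := by
          rw [Complex.normSq_mul, Complex.normSq_mul, h1, h2]
        rw [Complex.normSq_apply] at this
        rw [← htdef, hz3] at this
        nlinarith [this]
      have hxφ : x = φ t := HL_phi_unique h₁ h₂ hφ hx0 hcube
      have hxc2 : 0 < x + c₂ := by rw [hxφ]; exact hpos2 t
      have hxc1 : 0 < x + c₁ := by linarith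
      have hz₁0 : z₁ ≠ 0 := by
        intro h; rw [h] at h1; simp at h1; linarith
      have hz₂0 : z₂ ≠ 0 := by
        intro h; rw [h] at h2; simp at h2; linarith
      have hn1 : ‖z₁‖ = Real.sqrt (x + c₁) := by
        rw [← h1]
        rw [Complex.norm_def]
      have hn2 : ‖z₂‖ = Real.sqrt (x + c₂) := by
        rw [← h2]
        rw [Complex.norm_def]
      have hn1' : ‖z₁‖ ≠ 0 := norm_ne_zero_iff.2 hz₁0
      have hn2' : ‖z₂‖ ≠ 0 := norm_ne_zero_iff.2 hz₂0
      have habs1 : ‖z₁‖ ≠ 0 := hn1'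
      have habs2 : ‖z₂‖ ≠ 0 := hn2'
      have hu : z₁ / (‖z₁‖ : ℂ) ∈ Metric.sphere (0 : ℂ) 1 := by
        simp [norm_div, div_self habs1, hz₁0]
      have hv : z₂ / (‖z₂‖ : ℂ) ∈ Metric.sphere (0 : ℂ) 1 := by
        simp [norm_div, div_self habs2, hz₂0]
      refine ⟨(t, ⟨_, hu⟩, ⟨_, hv⟩), ?_⟩
      have hw : z₁ * z₂ * z₃ = (t : ℂ) + (c₃ : ℂ) * Complex.I := by
        apply Complex.ext
        · simp [htdef]
        · simp [hz3]
      simp only [PhiHL, ← hxφ]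
      rw [Prod.ext_iff, Prod.ext_iff]
      have hcast1 : ((‖z₁‖ : ℝ) : ℂ) ≠ 0 := Complex.ofReal_ne_zero.2 hn1'
      have hcast2 : ((‖z₂‖ : ℝ) : ℂ) ≠ 0 := Complex.ofReal_ne_zero.2 hn2'
      refine ⟨?_, ?_, ?_⟩
      · simp only [← hn1]
        rw [mul_comm, div_mul_cancel₀ _ hcast1]
      · simp only [← hn2]
        rw [mul_comm, div_mul_cancel₀ _ hcast2]
      · simp only [← hn1, ← hn2, ← hw]
        push_cast
        field_simp [hz₁0, hz₂0]
  -- embedding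
  have hΦemb : Topology.IsEmbedding (PhiHL c₁ c₂ c₃ φ) := by
    set U : Set (ℂ × ℂ × ℂ) := {z | z.1 ≠ 0 ∧ z.2.1 ≠ 0} with hUdef
    have hmem : ∀ p, PhiHL c₁ c₂ c₃ φ p ∈ U := by
      rintro ⟨t, u, v⟩
      constructor
      · exact mul_ne_zero (Complex.ofReal_ne_zero.2 (hs1 t).ne') (HL_sphere_ne u)
      · exact mul_ne_zero (Complex.ofReal_ne_zero.2 (hs2 t).ne') (HL_sphere_ne v)
    set Φ' : ℝ × ↥(Metric.sphere (0 : ℂ) 1) × ↥(Metric.sphere (0 : ℂ) 1) → ↥U :=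
      fun p => ⟨PhiHL c₁ c₂ c₃ φ p, hmem p⟩ with hΦ'def
    have hΦ'cont : Continuous Φ' := hΦcont.subtype_mk _
    have hmemH : ∀ z : ↥U, z.1.1 / (‖z.1.1‖ : ℂ) ∈ Metric.sphere (0 : ℂ) 1 ∧
        z.1.2.1 / (‖z.1.2.1‖ : ℂ) ∈ Metric.sphere (0 : ℂ) 1 := by
      rintro ⟨⟨z₁, z₂, z₃⟩, hz₁, hz₂⟩
      constructor
      · simp [norm_div, div_self (show ‖z₁‖ ≠ 0 from
          norm_ne_zero_iff.2 hz₁), (show z₁ ≠ 0 from hz₁)]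
      · simp [norm_div, div_self (show ‖z₂‖ ≠ 0 from
          norm_ne_zero_iff.2 hz₂), (show z₂ ≠ 0 from hz₂)]
    set H : ↥U → ℝ × ↥(Metric.sphere (0 : ℂ) 1) × ↥(Metric.sphere (0 : ℂ) 1) :=
      fun z => ((z.1.1 * z.1.2.1 * z.1.2.2).re, ⟨_, (hmemH z).1⟩, ⟨_, (hmemH z).2⟩) with hHdef
    have hHcont : Continuous H := by
      refine Continuous.prodMk ?_ (Continuous.prodMk ?_ ?_)
      · fun_prop
      · refine Continuous.subtype_mk ?_ _
        refine Continuous.div (by fun_prop) (by fun_prop) ?_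
        intro z
        exact Complex.ofReal_ne_zero.2 (norm_ne_zero_iff.2 z.2.1)
      · refine Continuous.subtype_mk ?_ _
        refine Continuous.div (by fun_prop) (by fun_prop) ?_
        intro z
        exact Complex.ofReal_ne_zero.2 (norm_ne_zero_iff.2 z.2.2)
    have hleft : ∀ p, H (Φ' p) = p := by
      rintro ⟨t, u, v⟩
      have hz := hprod (t, u, v)
      have ha : (0 : ℝ) < Real.sqrt (φ t + c₁) := hs1 t
      have hb : (0 : ℝ) < Real.sqrt (φ t + c₂) := hs2 t
      have hnorm1 : ‖(PhiHL c₁ c₂ c₃ φ (t, u, v)).1‖ = Real.sqrt (φ t + c₁) := by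
        simp only [PhiHL]
        rw [norm_mul, HL_sphere_norm u, mul_one, Complex.norm_real,
          Real.norm_of_nonneg ha.le]
      have hnorm2 : ‖(PhiHL c₁ c₂ c₃ φ (t, u, v)).2.1‖ = Real.sqrt (φ t + c₂) := by
        simp only [PhiHL]
        rw [norm_mul, HL_sphere_norm v, mul_one, Complex.norm_real,
          Real.norm_of_nonneg hb.le]
      simp only [hHdef, hΦ'def]
      rw [Prod.ext_iff, Prod.ext_iff]
      refine ⟨?_, ?_, ?_⟩
      · simp only
        rw [hz]
        simp
      · apply Subtype.ext
        simp only [hnorm1]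
        simp only [PhiHL]
        rw [mul_comm, mul_div_assoc, div_self (Complex.ofReal_ne_zero.2 ha.ne'), mul_one]
      · apply Subtype.ext
        simp only [hnorm2]
        simp only [PhiHL]
        rw [mul_comm, mul_div_assoc, div_self (Complex.ofReal_ne_zero.2 hb.ne'), mul_one]
    have hind : Topology.IsInducing Φ' := by
      refine Topology.IsInducing.of_comp hΦ'cont hHcont ?_
      rw [show H ∘ Φ' = id from funext hleft]
      exact Topology.IsInducing.id
    have hinj : Function.Injective Φ' := Function.LeftInverse.injective hleft
    have hΦ'emb : Topology.IsEmbedding Φ' := ⟨hind, hinj⟩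
    exact Topology.IsEmbedding.subtypeVal.comp hΦ'emb
  refine ⟨hΦemb, hrange, ?_⟩
  exact ⟨hΦemb.toHomeomorph.trans (Homeomorph.setCongr hrange)⟩
end

section
/- Let c₁ ≥ c₂ ≥ 0 and c₃ be real numbers with c₃ ≠ 0 or c₂ > 0. Then the fibre F⁻¹(c₁, c₂, c₃) is a connected subset of ℂ³. -/
open Complex

private lemma expmI (α β : ℝ) :
    Complex.exp (↑α*I) * Complex.exp (↑β*I) * Complex.exp (↑(-(α+β))*I) = 1 := by
  rw [← Complex.exp_add, ← Complex.exp_add, ← Complex.exp_zero]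
  congr 1
  push_cast
  ring

private lemma normSq_expI (x : ℝ) : Complex.normSq (Complex.exp (↑x*I)) = 1 := by
  rw [Complex.normSq_eq_norm_sq, Complex.norm_exp_ofReal_mul_I]
  norm_num

private lemma sqrt_mul3 (x y z : ℝ) (hx : 0 ≤ x) (hy : 0 ≤ y) :
    Real.sqrt x * Real.sqrt y * Real.sqrt z = Real.sqrt (x * y * z) := by
  rw [← Real.sqrt_mul hx, ← Real.sqrt_mul (mul_nonneg hx hy)]

private lemma case1 (c₁ c₂ c₃ : ℝ) (h₁ : c₂ ≤ c₁) (h₂ : 0 ≤ c₂) (hc₃ : c₃ ≠ 0) :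
    IsConnected (HLfib ⁻¹' {(c₁, c₂, c₃)}) := by
  have hc₁ : 0 ≤ c₁ := le_trans h₂ h₁
  set m := c₃^2 with hm
  have hm0 : 0 < m := by positivity
  set G : ℝ → ℝ := fun u => u * (c₁ + u) * (c₂ + u) with hG
  have hGcont : Continuous G := by fun_prop
  have hGmono : ∀ x y : ℝ, 0 ≤ x → x < y → G x < G y := by
    intro x y hx hxy
    simp only [hG]
    have hy : 0 < y := lt_of_le_of_lt hx hxy
    have k1 : x * (c₁ + x) * (c₂ + x) ≤ x * (c₁ + y) * (c₂ + y) := by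
      apply mul_le_mul (mul_le_mul_of_nonneg_left (by linarith) hx) (by linarith)
        (by linarith) (mul_nonneg hx (by linarith))
    have k2 : x * (c₁ + y) * (c₂ + y) < y * (c₁ + y) * (c₂ + y) :=
      mul_lt_mul_of_pos_right (mul_lt_mul_of_pos_right hxy (by linarith)) (by linarith)
    linarith
  obtain ⟨u₀, hu₀mem, hGu₀⟩ : ∃ u₀ ∈ Set.Icc (0:ℝ) (max 1 m), G u₀ = m := by
    have h0 : G 0 = 0 := by simp [hG]
    have hM1 : (1:ℝ) ≤ max 1 m := le_max_left _ _
    have hMm' : m ≤ max 1 m := le_max_right _ _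
    have hMm : m ≤ G (max 1 m) := by
      simp only [hG]
      have hstep : (max 1 m) * 1 * 1 ≤ (max 1 m) * (c₁ + max 1 m) * (c₂ + max 1 m) := by
        apply mul_le_mul (mul_le_mul_of_nonneg_left (by linarith) (by linarith))
          (by linarith) zero_le_one (mul_nonneg (by linarith) (by linarith))
      linarith
    have hmem : m ∈ Set.Icc (G 0) (G (max 1 m)) := by
      constructor
      · rw [h0]; exact hm0.le
      · exact hMm
    exact intermediate_value_Icc (le_max_of_le_left zero_le_one) hGcont.continuousOn hmem
  have hu₀pos : 0 < u₀ := by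
    rcases eq_or_lt_of_le hu₀mem.1 with h | h
    · exfalso
      rw [← h] at hGu₀
      simp [hG] at hGu₀
      exact hm0.ne (hGu₀ ▸ rfl)
    · exact h
  set R : ℝ → ℝ := fun x => x^2 + (3*u₀ + c₁ + c₂)*x + (3*u₀^2 + 2*(c₁+c₂)*u₀ + c₁*c₂)
    with hR
  have hkey : ∀ x : ℝ, G (u₀ + x) = m + x * R x := by
    intro x
    have h : G (u₀ + x) = G u₀ + x * R x := by simp only [hG, hR]; ring
    rw [h, hGu₀]
  have hRpos : ∀ x : ℝ, 0 ≤ x → 0 < R x := by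
    intro x hx
    simp only [hR]
    nlinarith
  have hGU : ∀ s : ℝ, 0 < G (u₀ + s^2) := by
    intro s
    rw [hkey]
    nlinarith [hRpos (s^2) (sq_nonneg s), sq_nonneg s]
  set a : ℝ → ℝ := fun s => s * Real.sqrt (R (s^2) / G (u₀ + s^2)) with ha
  set b : ℝ → ℝ := fun s => c₃ / Real.sqrt (G (u₀ + s^2)) with hb
  have hacont : Continuous a := by
    apply continuous_id.mul
    apply Real.continuous_sqrt.comp
    exact Continuous.div (by fun_prop) (by fun_prop) (fun s => (hGU s).ne')
  have hbcont : Continuous b := by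
    apply Continuous.div continuous_const (by fun_prop)
    intro s
    exact (Real.sqrt_pos.mpr (hGU s)).ne'
  set f : ℝ × ℝ × ℝ → ℂ × ℂ × ℂ := fun p =>
    (↑(Real.sqrt (c₁ + (u₀ + p.1^2))) * Complex.exp (↑p.2.1 * I),
     ↑(Real.sqrt (c₂ + (u₀ + p.1^2))) * Complex.exp (↑p.2.2 * I),
     ↑(Real.sqrt (u₀ + p.1^2)) * (↑(a p.1) + ↑(b p.1) * I) *
       Complex.exp (↑(-(p.2.1 + p.2.2)) * I)) with hf
  have hcont : Continuous f := by
    refine Continuous.prodMk (by fun_prop) (Continuous.prodMk (by fun_prop) ?_)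
    have h1 : Continuous fun p : ℝ × ℝ × ℝ => (↑(a p.1) : ℂ) :=
      Complex.continuous_ofReal.comp (hacont.comp continuous_fst)
    have h2 : Continuous fun p : ℝ × ℝ × ℝ => (↑(b p.1) : ℂ) :=
      Complex.continuous_ofReal.comp (hbcont.comp continuous_fst)
    exact ((Complex.continuous_ofReal.comp (by fun_prop)).mul
      (h1.add (h2.mul continuous_const))).mul (by fun_prop)
  -- unit modulus of a + b I
  have hab : ∀ s : ℝ, (a s)^2 + (b s)^2 = 1 := by
    intro s
    have hnn : (0:ℝ) ≤ R (s^2) / G (u₀ + s^2) :=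
      div_nonneg (hRpos (s^2) (sq_nonneg s)).le (hGU s).le
    have ha2 : (a s)^2 = s^2 * (R (s^2) / G (u₀ + s^2)) := by
      rw [ha]; rw [mul_pow, Real.sq_sqrt hnn]
    have hb2 : (b s)^2 = m / G (u₀ + s^2) := by
      rw [hb]; rw [div_pow, Real.sq_sqrt (hGU s).le, hm]
    rw [ha2, hb2]
    have hGne := (hGU s).ne'
    field_simp
    linarith [hkey (s^2)]
  have hrange : Set.range f = HLfib ⁻¹' {(c₁, c₂, c₃)} := by
    ext z
    constructor
    · rintro ⟨⟨s, α, β⟩, rfl⟩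
      simp only [Set.mem_preimage, Set.mem_singleton_iff, HLfib, hf, Prod.mk.injEq]
      have hu : (0:ℝ) < u₀ + s^2 := by positivity
      have h1 : (0:ℝ) ≤ c₁ + (u₀ + s^2) := by positivity
      have h2 : (0:ℝ) ≤ c₂ + (u₀ + s^2) := by positivity
      have hw : Complex.normSq (↑(a s) + ↑(b s) * I) = 1 := by
        rw [Complex.normSq_add_mul_I, hab]
      have k1 : normSq (↑(Real.sqrt (c₁ + (u₀ + s^2))) * Complex.exp (↑α * I))
          = c₁ + (u₀ + s^2) := by
        rw [Complex.normSq_mul, normSq_expI, Complex.normSq_ofReal,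
          Real.mul_self_sqrt h1, mul_one]
      have k2 : normSq (↑(Real.sqrt (c₂ + (u₀ + s^2))) * Complex.exp (↑β * I))
          = c₂ + (u₀ + s^2) := by
        rw [Complex.normSq_mul, normSq_expI, Complex.normSq_ofReal,
          Real.mul_self_sqrt h2, mul_one]
      have k3 : normSq (↑(Real.sqrt (u₀ + s^2)) * (↑(a s) + ↑(b s) * I) *
          Complex.exp (↑(-(α + β)) * I)) = u₀ + s^2 := by
        rw [Complex.normSq_mul, Complex.normSq_mul, normSq_expI, Complex.normSq_ofReal,
          Real.mul_self_sqrt hu.le, hw]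
        ring
      have hsq3 : Real.sqrt (c₁ + (u₀ + s^2)) * Real.sqrt (c₂ + (u₀ + s^2)) *
          Real.sqrt (u₀ + s^2) = Real.sqrt (G (u₀ + s^2)) := by
        rw [sqrt_mul3 _ _ _ h1 h2]
        congr 1
        simp only [hG]
        ring
      have hprod : (↑(Real.sqrt (c₁ + (u₀ + s^2))) * Complex.exp (↑α * I)) *
          (↑(Real.sqrt (c₂ + (u₀ + s^2))) * Complex.exp (↑β * I)) *
          (↑(Real.sqrt (u₀ + s^2)) * (↑(a s) + ↑(b s) * I) *
            Complex.exp (↑(-(α + β)) * I))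
          = ↑(Real.sqrt (c₁ + (u₀ + s^2)) * Real.sqrt (c₂ + (u₀ + s^2)) *
              Real.sqrt (u₀ + s^2)) * (↑(a s) + ↑(b s) * I) *
            (Complex.exp (↑α*I) * Complex.exp (↑β*I) * Complex.exp (↑(-(α+β))*I)) := by
        push_cast; ring
      refine ⟨?_, ?_, ?_⟩
      · rw [k1, k3]; ring
      · rw [k2, k3]; ring
      · rw [hprod, expmI, mul_one, hsq3]
        have : (↑(Real.sqrt (G (u₀ + s^2))) * (↑(a s) + ↑(b s) * I)).im
            = Real.sqrt (G (u₀ + s^2)) * (b s) := by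
          simp [Complex.add_im, Complex.ofReal_im, Complex.mul_im]
        rw [this, hb]
        field_simp
        exact div_self (Real.sqrt_pos.mpr (hGU s)).ne'
    · intro hz
      simp only [Set.mem_preimage, Set.mem_singleton_iff, HLfib, Prod.ext_iff] at hz
      obtain ⟨z₁, z₂, z₃⟩ := z
      obtain ⟨e1, e2, e3⟩ := hz
      have hz₃ : z₃ ≠ 0 := by
        intro h
        rw [h] at e3
        simp at e3
        exact hc₃ e3.symm
      set u' := normSq z₃ with hu'def
      have hu' : 0 < u' := Complex.normSq_pos.mpr hz₃
      have hn1 : normSq z₁ = c₁ + u' := by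
        simp only at e1; linarith
      have hn2 : normSq z₂ = c₂ + u' := by
        simp only at e2; linarith
      have hz₁ : z₁ ≠ 0 := by
        rw [← Complex.normSq_pos, hn1]; linarith
      have hz₂ : z₂ ≠ 0 := by
        rw [← Complex.normSq_pos, hn2]; linarith
      set W := z₁ * z₂ * z₃ with hW
      have e3' : W.im = c₃ := e3
      have hWn : normSq W = G u' := by
        rw [hW, Complex.normSq_mul, Complex.normSq_mul, hn1, hn2]
        simp only [hG]
        ring
      have hre : W.re^2 = G u' - m := by
        have h' : normSq W = W.re^2 + W.im^2 := by
          rw [Complex.normSq_apply]; ring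
        rw [hWn, e3', ← hm] at h'
        linarith
      have hGu'm : m ≤ G u' := by nlinarith [sq_nonneg W.re]
      have hGu' : 0 < G u' := lt_of_lt_of_le hm0 hGu'm
      have hu'ge : u₀ ≤ u' := by
        by_contra h
        push_neg at h
        have := hGmono u' u₀ hu'.le h
        rw [hGu₀] at this
        linarith
      set s := if 0 ≤ W.re then Real.sqrt (u' - u₀) else -Real.sqrt (u' - u₀) with hs
      have hs2 : s^2 = u' - u₀ := by
        rcases le_or_gt 0 W.re with hw | hw
        · rw [hs, if_pos hw, Real.sq_sqrt (by linarith)]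
        · rw [hs, if_neg (not_le.mpr hw), neg_pow, Real.sq_sqrt (by linarith)]
          ring
      have hus : u₀ + s^2 = u' := by rw [hs2]; ring
      have hsR2 : (s * Real.sqrt (R (s^2)))^2 = W.re^2 := by
        rw [mul_pow, Real.sq_sqrt (hRpos (s^2) (sq_nonneg s)).le, hre]
        have := hkey (s^2)
        rw [hus] at this
        linarith
      have hsgn : s * Real.sqrt (R (s^2)) = W.re := by
        rcases le_or_gt 0 W.re with hw | hw
        · have hsnn : 0 ≤ s * Real.sqrt (R (s^2)) := by
            rw [hs, if_pos hw]
            positivity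
          calc s * Real.sqrt (R (s^2)) = Real.sqrt ((s * Real.sqrt (R (s^2)))^2) :=
                (Real.sqrt_sq hsnn).symm
            _ = Real.sqrt (W.re^2) := by rw [hsR2]
            _ = W.re := Real.sqrt_sq hw
        · have hsnp : s * Real.sqrt (R (s^2)) ≤ 0 := by
            rw [hs, if_neg (not_le.mpr hw)]
            have : 0 ≤ Real.sqrt (u' - u₀) * Real.sqrt (R ((-Real.sqrt (u'-u₀))^2)) := by
              positivity
            nlinarith
          calc s * Real.sqrt (R (s^2)) = -Real.sqrt ((s * Real.sqrt (R (s^2)))^2) := by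
                rw [Real.sqrt_sq_eq_abs, abs_of_nonpos hsnp]; ring
            _ = -Real.sqrt (W.re^2) := by rw [hsR2]
            _ = W.re := by rw [Real.sqrt_sq_eq_abs, abs_of_neg hw]; ring
      have hsGne : Real.sqrt (G u') ≠ 0 := (Real.sqrt_pos.mpr hGu').ne'
      have haseq : a s = W.re / Real.sqrt (G u') := by
        rw [ha]
        simp only
        rw [hus, Real.sqrt_div (hRpos (s^2) (sq_nonneg s)).le, ← mul_div_assoc, hsgn]
      have hbseq : b s = c₃ / Real.sqrt (G u') := by
        rw [hb]; simp only; rw [hus]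
      have hwe : (↑(a s) + ↑(b s) * I) = W / ↑(Real.sqrt (G u')) := by
        have hne : (↑(Real.sqrt (G u')) : ℂ) ≠ 0 := Complex.ofReal_ne_zero.mpr hsGne
        rw [haseq, hbseq, ← e3', eq_div_iff hne]
        push_cast
        have hdd : (↑(Real.sqrt (G u')) : ℂ) / ↑(Real.sqrt (G u')) = 1 := div_self hne
        calc (↑W.re / ↑(Real.sqrt (G u')) + ↑W.im / ↑(Real.sqrt (G u')) * I) *
              ↑(Real.sqrt (G u'))
            = (↑W.re + ↑W.im * I) *
              ((↑(Real.sqrt (G u')) : ℂ) / ↑(Real.sqrt (G u'))) := by ring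
          _ = ↑W.re + ↑W.im * I := by rw [hdd, mul_one]
          _ = W := Complex.re_add_im W
      refine ⟨(s, Complex.arg z₁, Complex.arg z₂), ?_⟩
      simp only [hf, Prod.mk.injEq]
      have habs1 : ‖z₁‖ = Real.sqrt (c₁ + u') := by
        rw [Complex.norm_def, hn1]
      have habs2 : ‖z₂‖ = Real.sqrt (c₂ + u') := by
        rw [Complex.norm_def, hn2]
      have hb1 := Complex.norm_mul_exp_arg_mul_I z₁
      have hb2 := Complex.norm_mul_exp_arg_mul_I z₂
      have hsq3 : Real.sqrt u' * Real.sqrt (c₁ + u') * Real.sqrt (c₂ + u')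
          = Real.sqrt (G u') := by
        rw [sqrt_mul3 _ _ _ (Complex.normSq_nonneg z₃) (by linarith)]
      refine ⟨?_, ?_, ?_⟩
      · rw [hus, ← hn1, ← Complex.norm_def, Complex.norm_mul_exp_arg_mul_I]
      · rw [hus, ← hn2, ← Complex.norm_def, Complex.norm_mul_exp_arg_mul_I]
      · have hz12 : z₁ * z₂ ≠ 0 := mul_ne_zero hz₁ hz₂
        apply mul_right_cancel₀ hz12
        calc ↑(Real.sqrt (u₀ + s^2)) * (↑(a s) + ↑(b s) * I) *
              Complex.exp (↑(-(Complex.arg z₁ + Complex.arg z₂)) * I) * (z₁ * z₂)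
            = ↑(Real.sqrt u') * (W / ↑(Real.sqrt (G u'))) *
              Complex.exp (↑(-(Complex.arg z₁ + Complex.arg z₂)) * I) *
              ((↑(‖z₁‖) * Complex.exp (↑(Complex.arg z₁)*I)) *
               (↑(‖z₂‖) * Complex.exp (↑(Complex.arg z₂)*I))) := by
              rw [hus, hwe, hb1, hb2]
          _ = (W / ↑(Real.sqrt (G u'))) *
              ↑(Real.sqrt u' * ‖z₁‖ * ‖z₂‖) *
              (Complex.exp (↑(Complex.arg z₁)*I) * Complex.exp (↑(Complex.arg z₂)*I) *
               Complex.exp (↑(-(Complex.arg z₁ + Complex.arg z₂))*I)) := by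
              push_cast; ring
          _ = (W / ↑(Real.sqrt (G u'))) * ↑(Real.sqrt (G u')) := by
              rw [expmI, mul_one, habs1, habs2, hsq3]
          _ = W := div_mul_cancel₀ _ (Complex.ofReal_ne_zero.mpr hsGne)
          _ = z₃ * (z₁ * z₂) := by rw [hW]; ring
  rw [← hrange]
  exact isConnected_range hcont

private lemma case2 (c₁ c₂ : ℝ) (h₁ : c₂ ≤ c₁) (h₂ : 0 < c₂) :
    IsConnected (HLfib ⁻¹' {(c₁, c₂, 0)}) := by
  have hc₁ : 0 < c₁ := lt_of_lt_of_le h₂ h₁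
  set f : ℝ × ℝ × ℝ → ℂ × ℂ × ℂ := fun p =>
    (↑(Real.sqrt (c₁ + p.1^2)) * Complex.exp (↑p.2.1 * I),
     ↑(Real.sqrt (c₂ + p.1^2)) * Complex.exp (↑p.2.2 * I),
     ↑p.1 * Complex.exp (↑(-(p.2.1 + p.2.2)) * I)) with hf
  have hcont : Continuous f := by
    apply Continuous.prodMk
    · fun_prop
    · apply Continuous.prodMk <;> fun_prop
  have hrange : Set.range f = HLfib ⁻¹' {(c₁, c₂, 0)} := by
    ext z
    constructor
    · rintro ⟨⟨t, α, β⟩, rfl⟩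
      simp only [Set.mem_preimage, Set.mem_singleton_iff, HLfib, hf, Prod.mk.injEq]
      have h1 : (0:ℝ) ≤ c₁ + t^2 := by positivity
      have h2 : (0:ℝ) ≤ c₂ + t^2 := by positivity
      have hprod : (↑(Real.sqrt (c₁ + t^2)) * Complex.exp (↑α * I)) *
          (↑(Real.sqrt (c₂ + t^2)) * Complex.exp (↑β * I)) *
          (↑t * Complex.exp (↑(-(α + β)) * I))
          = ↑(Real.sqrt (c₁ + t^2) * Real.sqrt (c₂ + t^2) * t) *
            (Complex.exp (↑α*I) * Complex.exp (↑β*I) * Complex.exp (↑(-(α+β))*I)) := by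
        push_cast; ring
      have k1 : normSq (↑(Real.sqrt (c₁ + t^2)) * Complex.exp (↑α * I)) = c₁ + t^2 := by
        rw [Complex.normSq_mul, normSq_expI, Complex.normSq_ofReal, Real.mul_self_sqrt h1, mul_one]
      have k2 : normSq (↑(Real.sqrt (c₂ + t^2)) * Complex.exp (↑β * I)) = c₂ + t^2 := by
        rw [Complex.normSq_mul, normSq_expI, Complex.normSq_ofReal, Real.mul_self_sqrt h2, mul_one]
      have k3 : normSq (↑t * Complex.exp (↑(-(α + β)) * I)) = t^2 := by
        rw [Complex.normSq_mul, normSq_expI, Complex.normSq_ofReal, mul_one]; ring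
      refine ⟨?_, ?_, ?_⟩
      · rw [k1, k3]; ring
      · rw [k2, k3]; ring
      · rw [hprod, expmI, mul_one, Complex.ofReal_im]
    · intro hz
      simp only [Set.mem_preimage, Set.mem_singleton_iff, HLfib, Prod.ext_iff] at hz
      obtain ⟨e1, e2, e3⟩ := hz
      obtain ⟨z₁, z₂, z₃⟩ := z
      have hn1 : normSq z₁ = c₁ + normSq z₃ := by linarith
      have hn2 : normSq z₂ = c₂ + normSq z₃ := by linarith
      have hz₁ : z₁ ≠ 0 := by
        intro h; rw [h] at hn1; simp at hn1; nlinarith [normSq_nonneg z₃]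
      have hz₂ : z₂ ≠ 0 := by
        intro h; rw [h] at hn2; simp at hn2; nlinarith [normSq_nonneg z₃]
      have ha1 : ‖z₁‖ ≠ 0 := by simpa using hz₁
      have ha2 : ‖z₂‖ ≠ 0 := by simpa using hz₂
      set W := z₁ * z₂ * z₃ with hW
      set t := W.re / (‖z₁‖ * ‖z₂‖) with ht
      have hWre : W.re^2 = normSq z₁ * normSq z₂ * normSq z₃ := by
        have h' : normSq W = W.re^2 := by
          rw [Complex.normSq_apply, e3]; ring
        rw [← h', hW, Complex.normSq_mul, Complex.normSq_mul]
      have ht2 : t^2 = normSq z₃ := by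
        rw [ht]
        rw [div_pow, mul_pow, Complex.sq_norm, Complex.sq_norm, hWre]
        have hne : normSq z₁ * normSq z₂ ≠ 0 :=
          mul_ne_zero (Complex.normSq_pos.mpr hz₁).ne' (Complex.normSq_pos.mpr hz₂).ne'
        exact mul_div_cancel_left₀ _ hne
      refine ⟨(t, Complex.arg z₁, Complex.arg z₂), ?_⟩
      simp only [hf, Prod.mk.injEq]
      have hc1 : c₁ + t^2 = normSq z₁ := by rw [ht2]; linarith
      have hc2 : c₂ + t^2 = normSq z₂ := by rw [ht2]; linarith
      refine ⟨?_, ?_, ?_⟩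
      · rw [hc1, ← Complex.norm_def, Complex.norm_mul_exp_arg_mul_I]
      · rw [hc2, ← Complex.norm_def, Complex.norm_mul_exp_arg_mul_I]
      · have hz12 : z₁ * z₂ ≠ 0 := mul_ne_zero hz₁ hz₂
        apply mul_right_cancel₀ hz12
        have hb1 := Complex.norm_mul_exp_arg_mul_I z₁
        have hb2 := Complex.norm_mul_exp_arg_mul_I z₂
        calc ↑t * Complex.exp (↑(-(Complex.arg z₁ + Complex.arg z₂)) * I) * (z₁ * z₂)
            = ↑t * Complex.exp (↑(-(Complex.arg z₁ + Complex.arg z₂)) * I) *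
              ((↑(‖z₁‖) * Complex.exp (↑(Complex.arg z₁)*I)) *
               (↑(‖z₂‖) * Complex.exp (↑(Complex.arg z₂)*I))) := by rw [hb1, hb2]
          _ = ↑(t * ‖z₁‖ * ‖z₂‖) *
              (Complex.exp (↑(Complex.arg z₁)*I) * Complex.exp (↑(Complex.arg z₂)*I) *
               Complex.exp (↑(-(Complex.arg z₁ + Complex.arg z₂))*I)) := by
              push_cast; ring
          _ = ↑W.re := by
              rw [expmI, mul_one]; congr 1; rw [ht]; field_simp
          _ = W := by
              have : W = ↑W.re + ↑W.im * I := (Complex.re_add_im W).symm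
              rw [this, e3]; simp
          _ = z₃ * (z₁ * z₂) := by rw [hW]; ring
  rw [← hrange]
  exact isConnected_range hcont

/-- For `c₁ ≥ c₂ ≥ 0` and `c₃` with `c₃ ≠ 0` or `c₂ > 0`, the fibre
`F⁻¹(c₁, c₂, c₃)` is a connected subset of `ℂ³`. -/
theorem fibre_connected (c₁ c₂ c₃ : ℝ) (h₁ : c₂ ≤ c₁) (h₂ : 0 ≤ c₂)
    (h₃ : c₃ ≠ 0 ∨ 0 < c₂) :
    IsConnected (HLfib ⁻¹' {(c₁, c₂, c₃)}) := by
  by_cases h : c₃ = 0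
  · subst h
    rcases h₃ with h | h
    · exact absurd rfl h
    · exact case2 c₁ c₂ h₁ h
  · exact case1 c₁ c₂ c₃ h₁ h₂ h
end

section
/- Let c₁ ≥ c₂ ≥ 0 and c₃ be real numbers with c₃ ≠ 0 or c₂ > 0, and let c = (c₁, c₂, c₃). Then for every ε > 0 there exists R > 0 such that every point z ∈ F⁻¹(c) with |z| ≥ R satisfies dist(z, C ∪ (−C)) ≤ ε, where −C = {−z : z ∈ C} and dist denotes the Euclidean distance from a point to a set in ℂ³. -/
open Complex

/-- The Harvey–Lawson fibration `F : ℂ³ → ℝ³` on Euclidean `ℂ³`. -/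
noncomputable def HLfibE (z : EuclideanSpace ℂ (Fin 3)) : ℝ × ℝ × ℝ :=
  (normSq (z 0) - normSq (z 2), normSq (z 1) - normSq (z 2), (z 0 * z 1 * z 2).im)

/-- The Harvey–Lawson cone `C ⊆ ℂ³` (Euclidean `ℂ³`). -/
noncomputable def HLconeE : Set (EuclideanSpace ℂ (Fin 3)) :=
  {z | z ≠ 0 ∧ ‖z 0‖ = ‖z 1‖ ∧
    ‖z 1‖ = ‖z 2‖ ∧
    (z 0 * z 1 * z 2).im = 0 ∧ 0 < (z 0 * z 1 * z 2).re}

set_option maxHeartbeats 1000000 in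
/-- For `c₁ ≥ c₂ ≥ 0` and `c₃` with `c₃ ≠ 0` or `c₂ > 0`, the fibre
`F⁻¹(c)` is asymptotic at infinity to `C ∪ (−C)`: for every `ε > 0` there is `R > 0`
such that every `z ∈ F⁻¹(c)` with `|z| ≥ R` satisfies `dist(z, C ∪ (−C)) ≤ ε`
(Euclidean distance from a point to a set in `ℂ³`). -/
theorem fibre_asymptotic_to_double_cone (c₁ c₂ c₃ : ℝ) (h₁ : c₂ ≤ c₁) (h₂ : 0 ≤ c₂)
    (h₃ : c₃ ≠ 0 ∨ 0 < c₂) :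
    ∀ ε > (0 : ℝ), ∃ R > (0 : ℝ), ∀ z ∈ HLfibE ⁻¹' {(c₁, c₂, c₃)}, R ≤ ‖z‖ →
      Metric.infDist z (HLconeE ∪ (fun w => -w) '' HLconeE) ≤ ε := by
  intro ε hε
  have hc₁ : 0 ≤ c₁ := le_trans h₂ h₁
  set M : ℝ := 2 * c₁ + 2 * |c₃| with hMdef
  have hM0 : 0 ≤ M := by positivity
  set r₀ : ℝ := 1 + M / ε with hr₀def
  have hr₀1 : 1 ≤ r₀ := by
    rw [hr₀def]
    have : 0 ≤ M / ε := div_nonneg hM0 hε.le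
    linarith
  refine ⟨Real.sqrt (3 * r₀ ^ 2 + c₁ + c₂), Real.sqrt_pos.mpr (by positivity), ?_⟩
  intro z hz hR
  simp only [Set.mem_preimage, Set.mem_singleton_iff, HLfibE, Prod.mk.injEq] at hz
  obtain ⟨e₁, e₂, e₃⟩ := hz
  set r : ℝ := ‖z 2‖ with hrdef
  have hr0 : 0 ≤ r := norm_nonneg _
  have hr2 : r ^ 2 = normSq (z 2) := Complex.sq_norm _
  have hzn : ‖z‖ ^ 2 = 3 * normSq (z 2) + c₁ + c₂ := by
    have h : ‖z‖ ^ 2 = ∑ i, ‖z i‖ ^ 2 := by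
      rw [EuclideanSpace.norm_eq, Real.sq_sqrt (Finset.sum_nonneg fun i _ => sq_nonneg _)]
    rw [h, Fin.sum_univ_three]
    simp only [Complex.sq_norm]
    linarith
  have hrge : r₀ ≤ r := by
    have hA : 3 * r₀ ^ 2 + c₁ + c₂ ≤ ‖z‖ ^ 2 := by
      calc 3 * r₀ ^ 2 + c₁ + c₂ = Real.sqrt (3 * r₀ ^ 2 + c₁ + c₂) ^ 2 :=
            (Real.sq_sqrt (by positivity)).symm
        _ ≤ ‖z‖ ^ 2 := pow_le_pow_left₀ (Real.sqrt_nonneg _) hR 2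
    nlinarith only [hA, hzn, hr2, hr0, hr₀1]
  have hr1 : 1 ≤ r := le_trans hr₀1 hrge
  have hrpos : 0 < r := by linarith
  set a0 : ℝ := ‖z 0‖ with ha0def
  set a1 : ℝ := ‖z 1‖ with ha1def
  have ha0sq : a0 ^ 2 = r ^ 2 + c₁ := by
    rw [ha0def, Complex.sq_norm, hr2]; linarith
  have ha1sq : a1 ^ 2 = r ^ 2 + c₂ := by
    rw [ha1def, Complex.sq_norm, hr2]; linarith
  have ha0nn : 0 ≤ a0 := norm_nonneg _
  have ha1nn : 0 ≤ a1 := norm_nonneg _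
  have ha0ge : r ≤ a0 := by nlinarith only [ha0sq, hr0, ha0nn, hc₁]
  have ha1ge : r ≤ a1 := by nlinarith only [ha1sq, hr0, ha1nn, h₂]
  have ha0pos : 0 < a0 := lt_of_lt_of_le hrpos ha0ge
  have ha1pos : 0 < a1 := lt_of_lt_of_le hrpos ha1ge
  clear_value r a0 a1
  set w₀ : ℂ := ((r / a0 : ℝ) : ℂ) * z 0 with hw₀
  set w₁ : ℂ := ((r / a1 : ℝ) : ℂ) * z 1 with hw₁
  set u : ℂ := w₀ * w₁ * z 2 with hu
  set σ : ℝ := if 0 ≤ u.re then 1 else -1 with hσ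
  have hσcases : σ = 1 ∨ σ = -1 := by
    rw [hσ]; split <;> simp
  have hσsq : σ * σ = 1 := by rcases hσcases with h | h <;> rw [h] <;> ring
  have hσre : σ * u.re = |u.re| := by
    rw [hσ]; split
    · rw [_root_.abs_of_nonneg (by assumption)]; ring
    · rw [_root_.abs_of_neg (by linarith [lt_of_not_ge (by assumption)])]; ring
  set w₂ : ℂ := z 2 * ((starRingEnd ℂ) u * (σ : ℂ) / ((r ^ 3 : ℝ) : ℂ)) with hw₂
  clear_value w₂
  clear_value u
  clear_value σ
  clear_value w₀
  clear_value w₁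
  have habsw₀ : ‖w₀‖ = r := by
    rw [hw₀, norm_mul, Complex.norm_real, Real.norm_eq_abs, ← ha0def,
      _root_.abs_of_nonneg (div_nonneg hr0 ha0nn)]
    field_simp
  have habsw₁ : ‖w₁‖ = r := by
    rw [hw₁, norm_mul, Complex.norm_real, Real.norm_eq_abs, ← ha1def,
      _root_.abs_of_nonneg (div_nonneg hr0 ha1nn)]
    field_simp
  have habsu : ‖u‖ = r ^ 3 := by
    rw [hu, norm_mul, norm_mul, habsw₀, habsw₁, ← hrdef]; ring
  have hU : u.re ^ 2 + u.im ^ 2 = r ^ 6 := by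
    have h1 : normSq u = ‖u‖ ^ 2 := (Complex.sq_norm u).symm
    have h2 : normSq u = u.re ^ 2 + u.im ^ 2 := by rw [normSq_apply]; ring
    rw [habsu] at h1
    rw [h2] at h1
    rw [h1]; ring
  have hre_le : |u.re| ≤ r ^ 3 := by
    rw [← habsu]; exact Complex.abs_re_le_norm u
  have himu : |u.im| ≤ |c₃| := by
    have ht : u = ((r / a0 * (r / a1) : ℝ) : ℂ) * (z 0 * z 1 * z 2) := by
      rw [hu, hw₀, hw₁]; push_cast; ring
    have h1 : u.im = (r / a0 * (r / a1)) * c₃ := by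
      rw [ht, ← e₃]
      simp [Complex.mul_im]
    have ht0 : 0 ≤ r / a0 * (r / a1) :=
      mul_nonneg (div_nonneg hr0 ha0nn) (div_nonneg hr0 ha1nn)
    have ht1 : r / a0 * (r / a1) ≤ 1 :=
      mul_le_one₀ (div_le_one_of_le₀ ha0ge ha0nn) (div_nonneg hr0 ha1nn)
        (div_le_one_of_le₀ ha1ge ha1nn)
    rw [h1, abs_mul, _root_.abs_of_nonneg ht0]
    exact mul_le_of_le_one_left (abs_nonneg c₃) ht1
  have hr3ne : ((r ^ 3 : ℝ) : ℂ) ≠ 0 := by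
    simp only [ne_eq, Complex.ofReal_eq_zero]
    positivity
  have hprod : w₀ * w₁ * w₂ = ((r ^ 3 * σ : ℝ) : ℂ) := by
    have hmc : u * (starRingEnd ℂ) u = ((r ^ 3 : ℝ) : ℂ) * ((r ^ 3 : ℝ) : ℂ) := by
      rw [Complex.mul_conj]
      rw [show normSq u = ‖u‖ ^ 2 from (Complex.sq_norm u).symm, habsu]
      push_cast; ring
    have h1 : w₀ * w₁ * w₂ = u * (starRingEnd ℂ) u * (σ : ℂ) / ((r ^ 3 : ℝ) : ℂ) := by
      rw [hw₂, hu]; ring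
    rw [h1, hmc]
    have hrne : (r : ℂ) ≠ 0 := Complex.ofReal_ne_zero.mpr (ne_of_gt hrpos)
    push_cast
    field_simp
  have habsw₂ : ‖w₂‖ = r := by
    rw [hw₂, norm_mul, norm_div, norm_mul, Complex.norm_conj, habsu, Complex.norm_real,
      Real.norm_eq_abs, Complex.norm_real, Real.norm_eq_abs, ← hrdef, _root_.abs_of_nonneg (by positivity : (0:ℝ) ≤ r ^ 3)]
    have hσa : |σ| = 1 := by rcases hσcases with h | h <;> rw [h] <;> simp
    rw [hσa]
    field_simp
  set w : EuclideanSpace ℂ (Fin 3) := (WithLp.equiv 2 (Fin 3 → ℂ)).symm ![w₀, w₁, w₂]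
    with hwdef
  have hw0 : w 0 = w₀ := rfl
  have hw1 : w 1 = w₁ := rfl
  have hw2e : w 2 = w₂ := rfl
  have hwne : w ≠ 0 := by
    intro h
    have h2 : w₂ = 0 := by rw [← hw2e, h]; rfl
    rw [h2, norm_zero] at habsw₂
    linarith
  have hmem : w ∈ HLconeE ∪ (fun w => -w) '' HLconeE := by
    rcases hσcases with hσ1 | hσ1
    · left
      refine ⟨hwne, ?_, ?_, ?_, ?_⟩
      · show ‖w₀‖ = ‖w₁‖
        rw [habsw₀, habsw₁]
      · show ‖w₁‖ = ‖w₂‖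
        rw [habsw₁, habsw₂]
      · show (w₀ * w₁ * w₂).im = 0
        rw [hprod]; exact Complex.ofReal_im _
      · show 0 < (w₀ * w₁ * w₂).re
        rw [hprod, Complex.ofReal_re, hσ1]
        positivity
    · right
      refine ⟨-w, ⟨?_, ?_, ?_, ?_, ?_⟩, neg_neg w⟩
      · exact neg_ne_zero.mpr hwne
      · show ‖-w₀‖ = ‖-w₁‖
        rw [norm_neg, norm_neg, habsw₀, habsw₁]
      · show ‖-w₁‖ = ‖-w₂‖
        rw [norm_neg, norm_neg, habsw₁, habsw₂]
      · show ((-w₀) * (-w₁) * (-w₂)).im = 0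
        rw [show (-w₀) * (-w₁) * (-w₂) = -(w₀ * w₁ * w₂) by ring, hprod,
          Complex.neg_im, Complex.ofReal_im, neg_zero]
      · show 0 < ((-w₀) * (-w₁) * (-w₂)).re
        rw [show (-w₀) * (-w₁) * (-w₂) = -(w₀ * w₁ * w₂) by ring, hprod, hσ1,
          Complex.neg_re, Complex.ofReal_re]
        have h9 : (0:ℝ) < r ^ 3 := pow_pos hrpos 3
        linarith
  have hd0 : dist (z 0) w₀ ≤ c₁ / r := by
    have h1 : z 0 - w₀ = ((1 - r / a0 : ℝ) : ℂ) * z 0 := by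
      rw [hw₀]; push_cast; ring
    have h2 : r / a0 ≤ 1 := div_le_one_of_le₀ ha0ge ha0nn
    rw [dist_eq_norm, h1, norm_mul, Complex.norm_real, Real.norm_eq_abs,
      ← ha0def, _root_.abs_of_nonneg (by linarith)]
    have h3 : (1 - r / a0) * a0 = a0 - r := by field_simp
    rw [h3, le_div_iff₀ hrpos]
    nlinarith only [ha0sq, hr0, ha0ge, mul_nonneg ha0nn (sub_nonneg.mpr ha0ge)]
  have hd1 : dist (z 1) w₁ ≤ c₂ / r := by
    have h1 : z 1 - w₁ = ((1 - r / a1 : ℝ) : ℂ) * z 1 := by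
      rw [hw₁]; push_cast; ring
    have h2 : r / a1 ≤ 1 := div_le_one_of_le₀ ha1ge ha1nn
    rw [dist_eq_norm, h1, norm_mul, Complex.norm_real, Real.norm_eq_abs,
      ← ha1def, _root_.abs_of_nonneg (by linarith)]
    have h3 : (1 - r / a1) * a1 = a1 - r := by field_simp
    rw [h3, le_div_iff₀ hrpos]
    nlinarith only [ha1sq, hr0, ha1ge, mul_nonneg ha1nn (sub_nonneg.mpr ha1ge)]
  have key : ‖((r ^ 3 : ℝ) : ℂ) - u * (σ : ℂ)‖ ^ 2 ≤ 2 * c₃ ^ 2 := by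
    rw [Complex.sq_norm]
    have h1 : normSq (((r ^ 3 : ℝ) : ℂ) - u * (σ : ℂ))
        = r ^ 6 - 2 * r ^ 3 * (σ * u.re) + (u.re ^ 2 + u.im ^ 2) * (σ * σ) := by
      rw [normSq_apply]
      simp only [Complex.sub_re, Complex.sub_im, Complex.mul_re, Complex.mul_im,
        Complex.ofReal_re, Complex.ofReal_im]
      ring
    rw [h1, hσsq, hσre, hU]
    have him2 : u.im ^ 2 ≤ c₃ ^ 2 := by nlinarith only [himu, abs_nonneg u.im, _root_.sq_abs u.im, _root_.sq_abs c₃]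
    nlinarith only [hU, him2, _root_.sq_abs u.re,
      mul_nonneg (abs_nonneg u.re) (sub_nonneg.mpr hre_le)]
  have habs2 : ‖((r ^ 3 : ℝ) : ℂ) - u * (σ : ℂ)‖ ≤ 2 * |c₃| := by
    nlinarith only [key, norm_nonneg (((r ^ 3 : ℝ) : ℂ) - u * (σ : ℂ)),
      abs_nonneg c₃, _root_.sq_abs c₃, sq_nonneg c₃]
  have hd2 : dist (z 2) w₂ ≤ 2 * |c₃| / r := by
    have h1 : z 2 - w₂ = z 2 * ((((r ^ 3 : ℝ) : ℂ) - (starRingEnd ℂ) u * (σ : ℂ))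
        / ((r ^ 3 : ℝ) : ℂ)) := by
      have hrne : (r : ℂ) ≠ 0 := Complex.ofReal_ne_zero.mpr (ne_of_gt hrpos)
      rw [hw₂]
      field_simp
    have hconj : ‖((r ^ 3 : ℝ) : ℂ) - (starRingEnd ℂ) u * (σ : ℂ)‖
        = ‖((r ^ 3 : ℝ) : ℂ) - u * (σ : ℂ)‖ := by
      rw [← Complex.norm_conj]
      congr 1
      simp [map_sub, map_mul, Complex.conj_conj, Complex.conj_ofReal]
    rw [dist_eq_norm, h1, norm_mul, norm_div,
      hconj, ← hrdef, Complex.norm_real, Real.norm_eq_abs,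
      _root_.abs_of_nonneg (by positivity : (0:ℝ) ≤ r ^ 3)]
    have hA0 : 0 ≤ ‖((r ^ 3 : ℝ) : ℂ) - u * (σ : ℂ)‖ := norm_nonneg _
    have e : r * (‖((r ^ 3 : ℝ) : ℂ) - u * (σ : ℂ)‖ / r ^ 3)
        = ‖((r ^ 3 : ℝ) : ℂ) - u * (σ : ℂ)‖ / r ^ 2 := by
      field_simp
    rw [e, div_le_div_iff₀ (pow_pos hrpos 2) hrpos]
    nlinarith only [mul_le_mul_of_nonneg_right habs2 hr0,
      mul_nonneg (mul_nonneg (abs_nonneg c₃) hr0) (sub_nonneg.mpr hr1)]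
  have hdist : dist z w ≤ M / r := by
    have hde : dist z w = Real.sqrt (dist (z 0) w₀ ^ 2 + dist (z 1) w₁ ^ 2
        + dist (z 2) w₂ ^ 2) := by
      rw [EuclideanSpace.dist_eq, Fin.sum_univ_three, hw0, hw1, hw2e]
    have hsum : dist (z 0) w₀ ^ 2 + dist (z 1) w₁ ^ 2 + dist (z 2) w₂ ^ 2
        ≤ (dist (z 0) w₀ + dist (z 1) w₁ + dist (z 2) w₂) ^ 2 := by
      nlinarith only [mul_nonneg (dist_nonneg (x := z 0) (y := w₀)) (dist_nonneg (x := z 1) (y := w₁)),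
        mul_nonneg (dist_nonneg (x := z 0) (y := w₀)) (dist_nonneg (x := z 2) (y := w₂)),
        mul_nonneg (dist_nonneg (x := z 1) (y := w₁)) (dist_nonneg (x := z 2) (y := w₂))]
    rw [hde]
    calc Real.sqrt (dist (z 0) w₀ ^ 2 + dist (z 1) w₁ ^ 2 + dist (z 2) w₂ ^ 2)
        ≤ Real.sqrt ((dist (z 0) w₀ + dist (z 1) w₁ + dist (z 2) w₂) ^ 2) :=
          Real.sqrt_le_sqrt hsum
      _ = dist (z 0) w₀ + dist (z 1) w₁ + dist (z 2) w₂ := by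
          rw [Real.sqrt_sq (by positivity)]
      _ ≤ c₁ / r + c₂ / r + 2 * |c₃| / r := by
          exact add_le_add (add_le_add hd0 hd1) hd2
      _ ≤ M / r := by
          rw [hMdef, ← add_div, ← add_div, div_le_div_iff₀ hrpos hrpos]
          nlinarith only [mul_nonneg (sub_nonneg.mpr h₁) hr0]
  have hMr : M / r ≤ ε := by
    rw [div_le_iff₀ hrpos]
    have h1 : ε * r₀ = ε + M := by
      rw [hr₀def]; field_simp
    nlinarith only [mul_le_mul_of_nonneg_left hrge hε.le, h1, hε, hM0]
  calc Metric.infDist z (HLconeE ∪ (fun w => -w) '' HLconeE) ≤ dist z w :=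
        Metric.infDist_le_dist_of_mem hmem
    _ ≤ ε := le_trans hdist hMr
end

section
/- Define φ : L₁ → S¹ × ℂ by φ(z₁, z₂, z₃) = (z₁/√(|z₂|² + 1), z₂) and ψ : S¹ × ℂ → ℂ³ by ψ(w, z) = (√(|z|² + 1)·w, z, w̄·z̄). Then φ is well defined (|z₁/√(|z₂|²+1)| = 1 for (z₁,z₂,z₃) ∈ L₁), ψ maps S¹ × ℂ into L₁, φ and ψ are mutually inverse bijections between L₁ and S¹ × ℂ, and ψ is a homeomorphism from S¹ × ℂ onto L₁ (with its subspace topology from ℂ³). In particular L₁ is homeomorphic to S¹ × ℝ². -/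
open Complex

/-- The local model `L₁ ⊆ ℂ³`. -/
noncomputable def Lone : Set (ℂ × ℂ × ℂ) :=
  {z | normSq z.1 - 1 = normSq z.2.1 ∧ normSq z.2.1 = normSq z.2.2 ∧
    (z.1 * z.2.1 * z.2.2).im = 0 ∧ 0 ≤ (z.1 * z.2.1 * z.2.2).re}

/-- `φ : L₁ → S¹ × ℂ`, `φ(z₁,z₂,z₃) = (z₁/√(|z₂|²+1), z₂)`. -/
noncomputable def phiL (z : ℂ × ℂ × ℂ) : ℂ × ℂ :=
  (z.1 / ((Real.sqrt (normSq z.2.1 + 1) : ℝ) : ℂ), z.2.1)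

/-- `ψ : S¹ × ℂ → ℂ³`, `ψ(w,z) = (√(|z|²+1)·w, z, w̄·z̄)`. -/
noncomputable def psiL (p : ℂ × ℂ) : ℂ × ℂ × ℂ :=
  (((Real.sqrt (normSq p.2 + 1) : ℝ) : ℂ) * p.1, p.2,
    (starRingEnd ℂ) p.1 * (starRingEnd ℂ) p.2)

/-- `ψ` restricted to the genuine product `S¹ × ℂ` (with `S¹` the unit circle). -/
noncomputable def psiL' (p : ↥(Metric.sphere (0 : ℂ) 1) × ℂ) : ℂ × ℂ × ℂ :=
  psiL ((p.1 : ℂ), p.2)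

lemma sqrt_pos' (z : ℂ) : (0:ℝ) < Real.sqrt (normSq z + 1) :=
  Real.sqrt_pos.mpr (by nlinarith [normSq_nonneg z])

lemma sqrt_ne' (z : ℂ) : ((Real.sqrt (normSq z + 1) : ℝ) : ℂ) ≠ 0 := by
  exact_mod_cast ne_of_gt (sqrt_pos' z)

lemma sq_sqrt' (z : ℂ) : Real.sqrt (normSq z + 1) * Real.sqrt (normSq z + 1) = normSq z + 1 :=
  Real.mul_self_sqrt (by nlinarith [normSq_nonneg z])

lemma abs1 : ∀ z ∈ Lone, ‖(phiL z).1‖ = 1 := by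
  rintro ⟨z1, z2, z3⟩ ⟨ha, hb, hc, hd⟩
  dsimp only at ha hb hc hd
  simp only [phiL]
  rw [norm_div, Complex.norm_real, Real.norm_eq_abs, abs_of_pos (sqrt_pos' z2)]
  have h : ‖z1‖ = Real.sqrt (normSq z2 + 1) := by
    rw [Complex.norm_def]; congr 1; linarith
  rw [h, div_self (ne_of_gt (sqrt_pos' z2))]

lemma mem2 : ∀ w z : ℂ, ‖w‖ = 1 → psiL (w, z) ∈ Lone := by
  intro w z hw
  have hnw : normSq w = 1 := by rw [Complex.normSq_eq_norm_sq, hw]; norm_num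
  have key : (((Real.sqrt (normSq z + 1) : ℝ) : ℂ) * w) * z *
      ((starRingEnd ℂ) w * (starRingEnd ℂ) z)
      = ((Real.sqrt (normSq z + 1) * normSq z : ℝ) : ℂ) := by
    calc (((Real.sqrt (normSq z + 1) : ℝ) : ℂ) * w) * z *
        ((starRingEnd ℂ) w * (starRingEnd ℂ) z)
        = ((Real.sqrt (normSq z + 1) : ℝ) : ℂ) * (w * (starRingEnd ℂ) w) *
          (z * (starRingEnd ℂ) z) := by ring
      _ = _ := by rw [Complex.mul_conj, Complex.mul_conj, hnw]; push_cast; ring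
  refine ⟨?_, ?_, ?_, ?_⟩
  · show normSq (((Real.sqrt (normSq z + 1) : ℝ) : ℂ) * w) - 1 = normSq z
    rw [normSq_mul, normSq_ofReal, hnw, sq_sqrt']; ring
  · show normSq z = normSq ((starRingEnd ℂ) w * (starRingEnd ℂ) z)
    rw [normSq_mul, normSq_conj, normSq_conj, hnw]; ring
  · show ((((Real.sqrt (normSq z + 1) : ℝ) : ℂ) * w) * z *
      ((starRingEnd ℂ) w * (starRingEnd ℂ) z)).im = 0
    rw [key, ofReal_im]
  · show 0 ≤ ((((Real.sqrt (normSq z + 1) : ℝ) : ℂ) * w) * z *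
      ((starRingEnd ℂ) w * (starRingEnd ℂ) z)).re
    rw [key, ofReal_re]
    exact mul_nonneg (Real.sqrt_nonneg _) (normSq_nonneg z)

lemma inv3 : ∀ z ∈ Lone, psiL (phiL z) = z := by
  rintro ⟨z1, z2, z3⟩ ⟨ha, hb, hc, hd⟩
  dsimp only at ha hb hc hd
  simp only [psiL, phiL, Prod.mk.injEq]
  set s : ℝ := Real.sqrt (normSq z2 + 1) with hs
  have hsne : ((s : ℝ) : ℂ) ≠ 0 := sqrt_ne' z2
  refine ⟨mul_div_cancel₀ z1 hsne, trivial, ?_⟩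
  have hconj : (starRingEnd ℂ) (z1 / (s:ℂ)) = (starRingEnd ℂ) z1 / (s:ℂ) := by
    rw [map_div₀, Complex.conj_ofReal]
  rw [hconj]
  by_cases h2 : z2 = 0
  · have h3 : z3 = 0 := by
      rw [← normSq_eq_zero, ← hb, h2, normSq_zero]
    simp [h2, h3]
  · have hz1 : z1 ≠ 0 := by
      intro h; rw [h, normSq_zero] at ha; nlinarith [normSq_nonneg z2]
    have hn1 : normSq z1 = s * s := by rw [hs, sq_sqrt']; linarith
    have habsz1 : ‖z1‖ = s := by
      rw [Complex.norm_def]; rw [hs]; congr 1; linarith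
    have hp : z1 * z2 * z3 = ((s * normSq z2 : ℝ) : ℂ) := by
      have e0 : z1 * z2 * z3 = (((z1 * z2 * z3).re : ℝ) : ℂ) := by
        apply Complex.ext
        · simp
        · simp [hc]
      have e1 : ‖z1 * z2 * z3‖ = s * normSq z2 := by
        rw [norm_mul, norm_mul, habsz1]
        have h3 : ‖z3‖ = ‖z2‖ := by
          rw [Complex.norm_def, Complex.norm_def, hb]
        rw [h3, mul_assoc,
          show ‖z2‖ * ‖z2‖ = normSq z2 from by
            rw [← Complex.sq_norm]; ring]
      have e2 : (z1 * z2 * z3).re = ‖z1 * z2 * z3‖ := by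
        rw [Complex.norm_def, Complex.normSq_apply, hc]
        rw [show (z1*z2*z3).re * (z1*z2*z3).re + 0 * 0 = (z1*z2*z3).re ^ 2 from by ring,
          Real.sqrt_sq hd]
      rw [e0, e2, e1]
    apply mul_right_cancel₀ (mul_ne_zero hz1 h2)
    have hLHS : (starRingEnd ℂ) z1 / (s:ℂ) * (starRingEnd ℂ) z2 * (z1 * z2)
        = ((s * normSq z2 : ℝ) : ℂ) := by
      rw [div_mul_eq_mul_div, div_mul_eq_mul_div, div_eq_iff hsne]
      calc (starRingEnd ℂ) z1 * (starRingEnd ℂ) z2 * (z1 * z2)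
          = (z1 * (starRingEnd ℂ) z1) * (z2 * (starRingEnd ℂ) z2) := by ring
        _ = ((normSq z1 : ℝ) : ℂ) * ((normSq z2 : ℝ) : ℂ) := by
            rw [Complex.mul_conj, Complex.mul_conj]
        _ = _ := by rw [hn1]; push_cast; ring
    rw [hLHS, show z3 * (z1 * z2) = z1 * z2 * z3 from by ring, hp]

lemma inv4 : ∀ w z : ℂ, ‖w‖ = 1 → phiL (psiL (w, z)) = (w, z) := by
  intro w z hw
  simp only [phiL, psiL]
  exact Prod.ext (mul_div_cancel_left₀ w (sqrt_ne' z)) rfl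

noncomputable def gL (z : ℂ × ℂ × ℂ) : ℂ × ℂ :=
  (z.1 / ((Real.sqrt (normSq z.2.1 + 1) : ℝ) : ℂ), z.2.1)

lemma cont_g : Continuous gL := by
  refine Continuous.prodMk ?_ (continuous_fst.comp continuous_snd)
  exact continuous_fst.div
    (Complex.continuous_ofReal.comp (Real.continuous_sqrt.comp
      ((Complex.continuous_normSq.comp (continuous_fst.comp continuous_snd)).add
        continuous_const)))
    (fun z => sqrt_ne' z.2.1)

lemma cont_psiL' : Continuous psiL' := by
  unfold psiL' psiL
  have hs : Continuous fun p : ↥(Metric.sphere (0 : ℂ) 1) × ℂ =>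
      ((Real.sqrt (normSq p.2 + 1) : ℝ) : ℂ) :=
    Complex.continuous_ofReal.comp (Real.continuous_sqrt.comp
      ((Complex.continuous_normSq.comp continuous_snd).add continuous_const))
  have h1 : Continuous fun p : ↥(Metric.sphere (0 : ℂ) 1) × ℂ => (p.1 : ℂ) :=
    continuous_subtype_val.comp continuous_fst
  exact (hs.mul h1).prodMk (continuous_snd.prodMk
    ((Complex.continuous_conj.comp h1).mul (Complex.continuous_conj.comp continuous_snd)))

lemma comp_g : gL ∘ psiL' = fun p => ((p.1 : ℂ), p.2) := by
  funext p
  simp only [Function.comp, gL, psiL', psiL]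
  exact Prod.ext (mul_div_cancel_left₀ _ (sqrt_ne' p.2)) rfl

lemma emb5 : Topology.IsEmbedding psiL' := by
  have hemb : Topology.IsEmbedding (fun p : ↥(Metric.sphere (0 : ℂ) 1) × ℂ =>
      ((p.1 : ℂ), p.2)) :=
    Topology.IsEmbedding.subtypeVal.prodMap Topology.IsEmbedding.id
  refine ⟨Topology.IsInducing.of_comp cont_psiL' cont_g ?_, ?_⟩
  · rw [comp_g]; exact hemb.isInducing
  · intro a b h
    have h2 : (gL ∘ psiL') a = (gL ∘ psiL') b := congrArg gL h
    rw [comp_g] at h2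
    exact hemb.injective h2

lemma range5 : Set.range psiL' = Lone := by
  apply Set.Subset.antisymm
  · rintro _ ⟨⟨⟨w, hw⟩, z⟩, rfl⟩
    exact mem2 w z (by simpa [mem_sphere_zero_iff_norm] using hw)
  · intro z hz
    refine ⟨⟨⟨(phiL z).1, ?_⟩, (phiL z).2⟩, ?_⟩
    · simpa [mem_sphere_zero_iff_norm] using abs1 z hz
    · show psiL ((phiL z).1, (phiL z).2) = z
      exact inv3 z hz

lemma homeo7 : Nonempty (↥Lone ≃ₜ ↥(Metric.sphere (0 : ℂ) 1) × (ℝ × ℝ)) := by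
  refine ⟨((Homeomorph.setCongr range5.symm).trans
    emb5.toHomeomorph.symm).trans
    ((Homeomorph.refl _).prodCongr Complex.equivRealProdCLM.toHomeomorph)⟩

/-- `φ` is well defined on `L₁` (first coordinate lands in `S¹`),
`ψ` maps `S¹ × ℂ` into `L₁`, `φ` and `ψ` are mutually inverse, and `ψ` is a
homeomorphism from `S¹ × ℂ` onto `L₁` with its subspace topology.  In particular
`L₁` is homeomorphic to `S¹ × ℝ²`. -/
theorem Lone_parametrization :
    (∀ z ∈ Lone, ‖(phiL z).1‖ = 1) ∧
    (∀ w z : ℂ, ‖w‖ = 1 → psiL (w, z) ∈ Lone) ∧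
    (∀ z ∈ Lone, psiL (phiL z) = z) ∧
    (∀ w z : ℂ, ‖w‖ = 1 → phiL (psiL (w, z)) = (w, z)) ∧
    Topology.IsEmbedding psiL' ∧ Set.range psiL' = Lone ∧
    Nonempty (↥Lone ≃ₜ ↥(Metric.sphere (0 : ℂ) 1) × (ℝ × ℝ)) :=
  ⟨abs1, mem2, inv3, inv4, emb5, range5, homeo7⟩
end

section
/- The map (u, v) ↦ (u/√3, v/√3, (ū·v̄)/√3) is a homeomorphism from S¹ × S¹ onto the link Σ = C ∩ S⁵, where S⁵ = {z ∈ ℂ³ : |z₁|² + |z₂|² + |z₃|² = 1}. In particular Σ is homeomorphic to the 2-torus T². -/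
open Complex

/-- The Harvey–Lawson cone `C ⊆ ℂ³`. -/
noncomputable def HLcone : Set (ℂ × ℂ × ℂ) :=
  {z | z ≠ 0 ∧ ‖z.1‖ = ‖z.2.1‖ ∧
    ‖z.2.1‖ = ‖z.2.2‖ ∧
    (z.1 * z.2.1 * z.2.2).im = 0 ∧ 0 < (z.1 * z.2.1 * z.2.2).re}

/-- The unit sphere `S⁵ ⊆ ℂ³`. -/
def unitS5 : Set (ℂ × ℂ × ℂ) :=
  {z | normSq z.1 + normSq z.2.1 + normSq z.2.2 = 1}

/-- The map `S¹ × S¹ → ℂ³`, `(u,v) ↦ (u/√3, v/√3, (ū·v̄)/√3)`. -/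
noncomputable def linkMap (p : ↥(Metric.sphere (0 : ℂ) 1) × ↥(Metric.sphere (0 : ℂ) 1)) :
    ℂ × ℂ × ℂ :=
  ((p.1 : ℂ) / ((Real.sqrt 3 : ℝ) : ℂ), (p.2 : ℂ) / ((Real.sqrt 3 : ℝ) : ℂ),
   (starRingEnd ℂ) (p.1 : ℂ) * (starRingEnd ℂ) (p.2 : ℂ) / ((Real.sqrt 3 : ℝ) : ℂ))

lemma sqrt3_pos : (0:ℝ) < Real.sqrt 3 := Real.sqrt_pos.mpr (by norm_num)

lemma sqrt3_ne : ((Real.sqrt 3 : ℝ) : ℂ) ≠ 0 := by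
  exact_mod_cast (ne_of_gt sqrt3_pos)

lemma sq_sqrt3 : Real.sqrt 3 ^ 2 = 3 := Real.sq_sqrt (by norm_num)

lemma linkMap_continuous : Continuous linkMap := by
  unfold linkMap
  have h1 : Continuous fun p : ↥(Metric.sphere (0:ℂ) 1) × ↥(Metric.sphere (0:ℂ) 1) =>
      (p.1 : ℂ) := continuous_subtype_val.comp continuous_fst
  have h2 : Continuous fun p : ↥(Metric.sphere (0:ℂ) 1) × ↥(Metric.sphere (0:ℂ) 1) =>
      (p.2 : ℂ) := continuous_subtype_val.comp continuous_snd
  exact (h1.div_const _).prodMk ((h2.div_const _).prodMk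
    (((Complex.continuous_conj.comp h1).mul (Complex.continuous_conj.comp h2)).div_const _))

lemma linkMap_injective : Function.Injective linkMap := by
  rintro ⟨⟨u, hu⟩, ⟨v, hv⟩⟩ ⟨⟨u', hu'⟩, ⟨v', hv'⟩⟩ h
  simp only [linkMap, Prod.mk.injEq] at h
  have h1 : u = u' := by
    have := h.1
    field_simp [sqrt3_ne] at this
    exact this
  have h2 : v = v' := by
    have := h.2.1
    field_simp [sqrt3_ne] at this
    exact this
  simp [h1, h2]

lemma linkMap_range : Set.range linkMap = HLcone ∩ unitS5 := by
  have hs3 : (0:ℝ) < Real.sqrt 3 := sqrt3_pos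
  ext z
  constructor
  · rintro ⟨⟨⟨u, hu⟩, ⟨v, hv⟩⟩, rfl⟩
    have hu1 : ‖u‖ = 1 := by simpa using hu
    have hv1 : ‖v‖ = 1 := by simpa using hv
    have hun : normSq u = 1 := by rw [← Complex.sq_norm, hu1]; norm_num
    have hvn : normSq v = 1 := by rw [← Complex.sq_norm, hv1]; norm_num
    have hprod : (u / ((Real.sqrt 3 : ℝ) : ℂ)) * (v / ((Real.sqrt 3 : ℝ) : ℂ)) *
        ((starRingEnd ℂ) u * (starRingEnd ℂ) v / ((Real.sqrt 3 : ℝ) : ℂ)) =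
        ((1 / (Real.sqrt 3 ^ 3) : ℝ) : ℂ) := by
      have h1 : u * (starRingEnd ℂ) u = 1 := by
        rw [Complex.mul_conj, hun]; norm_num
      have h2 : v * (starRingEnd ℂ) v = 1 := by
        rw [Complex.mul_conj, hvn]; norm_num
      have e : (u / ((Real.sqrt 3 : ℝ) : ℂ)) * (v / ((Real.sqrt 3 : ℝ) : ℂ)) *
          ((starRingEnd ℂ) u * (starRingEnd ℂ) v / ((Real.sqrt 3 : ℝ) : ℂ)) =
          (u * (starRingEnd ℂ) u) * (v * (starRingEnd ℂ) v) / ((Real.sqrt 3 : ℝ) : ℂ)^3 := by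
        ring
      rw [e, h1, h2]
      push_cast
      ring
    constructor
    · refine ⟨?_, ?_, ?_, ?_, ?_⟩
      · intro hz
        rw [Prod.ext_iff] at hz
        have : u / ((Real.sqrt 3 : ℝ) : ℂ) = 0 := hz.1
        rw [div_eq_zero_iff] at this
        rcases this with h | h
        · rw [h] at hu1; simp at hu1
        · exact sqrt3_ne h
      · show ‖u / ((Real.sqrt 3 : ℝ) : ℂ)‖ =
            ‖v / ((Real.sqrt 3 : ℝ) : ℂ)‖
        rw [norm_div, norm_div, hu1, hv1]
      · show ‖v / ((Real.sqrt 3 : ℝ) : ℂ)‖ =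
            ‖(starRingEnd ℂ) u * (starRingEnd ℂ) v / ((Real.sqrt 3 : ℝ) : ℂ)‖
        rw [norm_div, norm_div, norm_mul, Complex.norm_conj, Complex.norm_conj, hu1, hv1]
        norm_num
      · show ((u / ((Real.sqrt 3 : ℝ) : ℂ)) * (v / ((Real.sqrt 3 : ℝ) : ℂ)) *
            ((starRingEnd ℂ) u * (starRingEnd ℂ) v / ((Real.sqrt 3 : ℝ) : ℂ))).im = 0
        rw [hprod]
        exact Complex.ofReal_im _
      · show 0 < ((u / ((Real.sqrt 3 : ℝ) : ℂ)) * (v / ((Real.sqrt 3 : ℝ) : ℂ)) *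
            ((starRingEnd ℂ) u * (starRingEnd ℂ) v / ((Real.sqrt 3 : ℝ) : ℂ))).re
        rw [hprod, Complex.ofReal_re]
        positivity
    · show normSq (u / ((Real.sqrt 3 : ℝ) : ℂ)) + normSq (v / ((Real.sqrt 3 : ℝ) : ℂ)) +
          normSq ((starRingEnd ℂ) u * (starRingEnd ℂ) v / ((Real.sqrt 3 : ℝ) : ℂ)) = 1
      simp only [normSq_div, normSq_mul, normSq_conj, hun, hvn, Complex.normSq_ofReal]
      have : Real.sqrt 3 * Real.sqrt 3 = 3 := Real.mul_self_sqrt (by norm_num)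
      rw [this]
      norm_num
  · rintro ⟨⟨hne, hab, hbc, him, hre⟩, hS⟩
    obtain ⟨a, b, c⟩ := z
    simp only [unitS5, Set.mem_setOf_eq] at hS
    simp only at hab hbc him hre hne
    -- normSq's are equal
    have hnab : normSq a = normSq b := by
      rw [← Complex.sq_norm, ← Complex.sq_norm, hab]
    have hnbc : normSq b = normSq c := by
      rw [← Complex.sq_norm, ← Complex.sq_norm, hbc]
    have hna : normSq a = 1/3 := by
      rw [hnab, hnbc] at hS ⊢
      linarith
    have hnb : normSq b = 1/3 := by rw [← hnab, hna]
    have hnc : normSq c = 1/3 := by rw [← hnbc, hnb]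
    have ha0 : a ≠ 0 := by
      intro h; rw [h] at hna; simp at hna
    have hb0 : b ≠ 0 := by
      intro h; rw [h] at hnb; simp at hnb
    -- abs values
    set s : ℂ := ((Real.sqrt 3 : ℝ) : ℂ) with hsdef
    refine ⟨(⟨s * a, ?_⟩, ⟨s * b, ?_⟩), ?_⟩
    · rw [mem_sphere_zero_iff_norm]
      have : ‖s * a‖ ^ 2 = 1 := by
        rw [norm_mul, mul_pow, Complex.sq_norm, Complex.sq_norm, hna]
        simp only [hsdef, normSq_ofReal]
        nlinarith [sq_sqrt3]
      have hnn : 0 ≤ ‖s * a‖ := norm_nonneg _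
      show ‖s * a‖ = 1
      nlinarith [this, hnn]
    · rw [mem_sphere_zero_iff_norm]
      have : ‖s * b‖ ^ 2 = 1 := by
        rw [norm_mul, mul_pow, Complex.sq_norm, Complex.sq_norm, hnb]
        simp only [hsdef, normSq_ofReal]
        nlinarith [sq_sqrt3]
      have hnn : 0 ≤ ‖s * b‖ := norm_nonneg _
      show ‖s * b‖ = 1
      nlinarith [this, hnn]
    · -- linkMap value equals (a,b,c)
      simp only [linkMap]
      have hsne : s ≠ 0 := sqrt3_ne
      refine Prod.ext ?_ (Prod.ext ?_ ?_)
      · show s * a / s = a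
        field_simp
      · show s * b / s = b
        field_simp
      · show (starRingEnd ℂ) (s * a) * (starRingEnd ℂ) (s * b) / s = c
        -- a*b*c is the real number abs(a*b*c)
        have habc : a * b * c = ((a*b*c).re : ℂ) := by
          apply Complex.ext <;> simp [him]
        have habcre : (a * b * c).re = 1 / (3 * Real.sqrt 3) := by
          have h1 : ‖a*b*c‖ = (a*b*c).re := by
            rw [Complex.norm_def, Complex.normSq_apply, him, mul_zero, add_zero,
              ← pow_two, Real.sqrt_sq hre.le]
          have h2 : ‖a*b*c‖ ^ 2 = (1/3)^3 := by
            rw [Complex.sq_norm, normSq_mul, normSq_mul, hna, hnb, hnc]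
            norm_num
          have h3 : (3 * Real.sqrt 3) ^ 2 = 27 := by nlinarith [sq_sqrt3]
          have h5 : (a*b*c).re * (3*Real.sqrt 3) = 1 := by
            have e : ((a*b*c).re * (3*Real.sqrt 3))^2 = 1 := by
              rw [mul_pow, ← h1, h2, h3]; norm_num
            have pos : (0:ℝ) < (a*b*c).re * (3*Real.sqrt 3) := by
              have : (0:ℝ) < 3 * Real.sqrt 3 := by positivity
              exact mul_pos hre this
            nlinarith [e, pos]
          have h6 : (0:ℝ) < 3 * Real.sqrt 3 := by positivity
          rw [eq_div_iff h6.ne']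
          linarith [h5]
        have key : a * b * c = ((1 / (3 * Real.sqrt 3) : ℝ) : ℂ) := by
          rw [habc, habcre]
        -- conj a * a = normSq a = 1/3 etc.
        have hca : (starRingEnd ℂ) a * a = ((1/3 : ℝ) : ℂ) := by
          rw [mul_comm, Complex.mul_conj, hna]
        have hcb : (starRingEnd ℂ) b * b = ((1/3 : ℝ) : ℂ) := by
          rw [mul_comm, Complex.mul_conj, hnb]
        simp only [map_mul, hsdef, Complex.conj_ofReal]
        have hssq : ((Real.sqrt 3 : ℝ) : ℂ) * ((Real.sqrt 3 : ℝ) : ℂ) = 3 := by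
          rw [← Complex.ofReal_mul, Real.mul_self_sqrt (by norm_num)]
          norm_num
        rw [div_eq_iff sqrt3_ne]
        -- goal: conj(√3)*conj a * (conj(√3) * conj b) = c * √3
        -- multiply structure: use cancellation via a,b
        have hmul : ∀ x y : ℂ, a * b * x = a * b * y → x = y := by
          intro x y h
          have := mul_left_cancel₀ (mul_ne_zero ha0 hb0) h
          exact this
        apply hmul
        have lhs : a * b * (((Real.sqrt 3 : ℝ):ℂ) * (starRingEnd ℂ) a *
            (((Real.sqrt 3 : ℝ):ℂ) * (starRingEnd ℂ) b)) =
            3 * (((1:ℝ)/3 : ℝ):ℂ) * (((1:ℝ)/3 : ℝ):ℂ) := by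
          calc a * b * (((Real.sqrt 3 : ℝ):ℂ) * (starRingEnd ℂ) a *
              (((Real.sqrt 3 : ℝ):ℂ) * (starRingEnd ℂ) b))
              = (((Real.sqrt 3 : ℝ):ℂ) * ((Real.sqrt 3 : ℝ):ℂ)) *
                (((starRingEnd ℂ) a * a) * ((starRingEnd ℂ) b * b)) := by ring
            _ = 3 * (((1:ℝ)/3 : ℝ):ℂ) * (((1:ℝ)/3 : ℝ):ℂ) := by
                rw [hssq, hca, hcb]; ring
        rw [lhs]
        have rhs : a * b * (c * ((Real.sqrt 3 : ℝ):ℂ)) =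
            ((1 / (3 * Real.sqrt 3) : ℝ) : ℂ) * ((Real.sqrt 3 : ℝ):ℂ) := by
          rw [← mul_assoc, key]
        rw [rhs]
        rw [← Complex.ofReal_mul]
        have : (1 / (3 * Real.sqrt 3)) * Real.sqrt 3 = 1/3 := by
          field_simp
        rw [this]
        push_cast
        ring

/-- The map `(u,v) ↦ (u/√3, v/√3, (ū·v̄)/√3)` is a homeomorphism
from `S¹ × S¹` onto the link `Σ = C ∩ S⁵`; in particular `Σ` is homeomorphic to the
`2`-torus `T² = S¹ × S¹`. -/
theorem link_is_torus :
    Topology.IsEmbedding linkMap ∧ Set.range linkMap = HLcone ∩ unitS5 ∧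
    Nonempty (↥(HLcone ∩ unitS5) ≃ₜ
      ↥(Metric.sphere (0 : ℂ) 1) × ↥(Metric.sphere (0 : ℂ) 1)) := by
  have hemb : Topology.IsEmbedding linkMap :=
    (linkMap_continuous.isClosedEmbedding linkMap_injective).isEmbedding
  refine ⟨hemb, linkMap_range, ?_⟩
  exact ⟨(Homeomorph.setCongr linkMap_range.symm).trans
    hemb.toHomeomorph.symm⟩
end

section
/- The map (λ, u, v) ↦ (λu, λv, λ·ū·v̄) is a homeomorphism from (0, ∞) × S¹ × S¹ onto the cone C. In particular C is a connected subset of ℂ³, and C is invariant under scaling: for every t > 0, t·C = C. -/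
open Complex

/-- The map `(0,∞) × S¹ × S¹ → ℂ³`, `(λ,u,v) ↦ (λu, λv, λ·ū·v̄)`. -/
noncomputable def coneMap
    (p : ↥(Set.Ioi (0 : ℝ)) × ↥(Metric.sphere (0 : ℂ) 1) × ↥(Metric.sphere (0 : ℂ) 1)) :
    ℂ × ℂ × ℂ :=
  (((p.1 : ℝ) : ℂ) * (p.2.1 : ℂ), ((p.1 : ℝ) : ℂ) * (p.2.2 : ℂ),
   ((p.1 : ℝ) : ℂ) * ((starRingEnd ℂ) (p.2.1 : ℂ) * (starRingEnd ℂ) (p.2.2 : ℂ)))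

namespace ConeAux

lemma abs_eq_one {u : ℂ} (hu : u ∈ Metric.sphere (0 : ℂ) 1) : ‖u‖ = 1 := by
  simpa using mem_sphere_zero_iff_norm.mp hu

lemma mem_sphere_div {w : ℂ} (hw : w ≠ 0) :
    ((‖w‖ : ℝ) : ℂ)⁻¹ * w ∈ Metric.sphere (0 : ℂ) 1 := by
  have h : ‖w‖ ≠ 0 := norm_ne_zero_iff.mpr hw
  simp [mem_sphere_zero_iff_norm, map_inv₀, Complex.norm_real, Real.norm_eq_abs,
    _root_.abs_of_nonneg (norm_nonneg w), inv_mul_cancel₀ h]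

/-- the open set where the inverse lives -/
def U : Set (ℂ × ℂ × ℂ) := {z | z.1 ≠ 0 ∧ z.2.1 ≠ 0}

lemma coneMap_mem_U (p : ↥(Set.Ioi (0 : ℝ)) × ↥(Metric.sphere (0 : ℂ) 1) ×
    ↥(Metric.sphere (0 : ℂ) 1)) : coneMap p ∈ U := by
  obtain ⟨⟨l, hl⟩, ⟨u, hu⟩, ⟨v, hv⟩⟩ := p
  have hl0 : (l : ℂ) ≠ 0 := by exact_mod_cast ne_of_gt (Set.mem_Ioi.mp hl)
  have hu0 : u ≠ 0 := by
    intro h; simpa [h] using abs_eq_one hu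
  have hv0 : v ≠ 0 := by
    intro h; simpa [h] using abs_eq_one hv
  exact ⟨mul_ne_zero hl0 hu0, mul_ne_zero hl0 hv0⟩

noncomputable def G (z : ↥U) :
    ↥(Set.Ioi (0 : ℝ)) × ↥(Metric.sphere (0 : ℂ) 1) × ↥(Metric.sphere (0 : ℂ) 1) :=
  (⟨‖(z : ℂ × ℂ × ℂ).1‖, norm_pos_iff.mpr z.2.1⟩,
   ⟨((‖(z : ℂ × ℂ × ℂ).1‖ : ℝ) : ℂ)⁻¹ * (z : ℂ × ℂ × ℂ).1, mem_sphere_div z.2.1⟩,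
   ⟨((‖(z : ℂ × ℂ × ℂ).2.1‖ : ℝ) : ℂ)⁻¹ * (z : ℂ × ℂ × ℂ).2.1, mem_sphere_div z.2.2⟩)

lemma continuous_G : Continuous G := by
  have h1 : Continuous fun z : ↥U => (z : ℂ × ℂ × ℂ).1 :=
    continuous_fst.comp continuous_subtype_val
  have h2 : Continuous fun z : ↥U => (z : ℂ × ℂ × ℂ).2.1 :=
    (continuous_fst.comp continuous_snd).comp continuous_subtype_val
  refine Continuous.prodMk ?_ (Continuous.prodMk ?_ ?_)
  · exact (continuous_norm.comp h1).subtype_mk _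
  · exact (((Complex.continuous_ofReal.comp (continuous_norm.comp h1)).inv₀
      (fun z => by simp only [Function.comp_apply, ne_eq, Complex.ofReal_eq_zero]; exact norm_ne_zero_iff.mpr z.2.1)).mul h1).subtype_mk _
  · exact (((Complex.continuous_ofReal.comp (continuous_norm.comp h2)).inv₀
      (fun z => by simp only [Function.comp_apply, ne_eq, Complex.ofReal_eq_zero]; exact norm_ne_zero_iff.mpr z.2.2)).mul h2).subtype_mk _

lemma continuous_coneMap : Continuous coneMap := by
  have hl : Continuous fun p : ↥(Set.Ioi (0 : ℝ)) × ↥(Metric.sphere (0 : ℂ) 1) ×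
      ↥(Metric.sphere (0 : ℂ) 1) => ((p.1 : ℝ) : ℂ) :=
    Complex.continuous_ofReal.comp (continuous_subtype_val.comp continuous_fst)
  have hu : Continuous fun p : ↥(Set.Ioi (0 : ℝ)) × ↥(Metric.sphere (0 : ℂ) 1) ×
      ↥(Metric.sphere (0 : ℂ) 1) => (p.2.1 : ℂ) :=
    continuous_subtype_val.comp (continuous_fst.comp continuous_snd)
  have hv : Continuous fun p : ↥(Set.Ioi (0 : ℝ)) × ↥(Metric.sphere (0 : ℂ) 1) ×
      ↥(Metric.sphere (0 : ℂ) 1) => (p.2.2 : ℂ) :=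
    continuous_subtype_val.comp (continuous_snd.comp continuous_snd)
  exact (hl.mul hu).prodMk ((hl.mul hv).prodMk
    (hl.mul ((Complex.continuous_conj.comp hu).mul (Complex.continuous_conj.comp hv))))

lemma left_inv : Function.LeftInverse G (fun p => (⟨coneMap p, coneMap_mem_U p⟩ : ↥U)) := by
  rintro ⟨⟨l, hl⟩, ⟨u, hu⟩, ⟨v, hv⟩⟩
  have hlpos : (0 : ℝ) < l := Set.mem_Ioi.mp hl
  have hl0 : (l : ℂ) ≠ 0 := by exact_mod_cast ne_of_gt hlpos
  have habs1 : ‖(l : ℂ) * u‖ = l := by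
    rw [norm_mul, abs_eq_one hu, Complex.norm_real, Real.norm_eq_abs, abs_of_pos hlpos, mul_one]
  have habs2 : ‖(l : ℂ) * v‖ = l := by
    rw [norm_mul, abs_eq_one hv, Complex.norm_real, Real.norm_eq_abs, abs_of_pos hlpos, mul_one]
  simp only [G, coneMap, Prod.mk.injEq, Subtype.mk.injEq]
  refine ⟨by simpa using habs1, ?_, ?_⟩
  · rw [habs1]; field_simp
  · rw [habs2]; field_simp

lemma isEmbedding_coneMap : Topology.IsEmbedding coneMap := by
  have h1 : Topology.IsEmbedding (fun p => (⟨coneMap p, coneMap_mem_U p⟩ : ↥U)) :=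
    Function.LeftInverse.isEmbedding left_inv continuous_G
      (continuous_coneMap.subtype_mk _)
  have : coneMap = (Subtype.val : ↥U → ℂ × ℂ × ℂ) ∘
      (fun p => (⟨coneMap p, coneMap_mem_U p⟩ : ↥U)) := rfl
  rw [this]
  exact Topology.IsEmbedding.subtypeVal.comp h1

lemma range_eq : Set.range coneMap = HLcone := by
  ext z
  constructor
  · rintro ⟨⟨⟨l, hl⟩, ⟨u, hu⟩, ⟨v, hv⟩⟩, rfl⟩
    have hlpos : (0 : ℝ) < l := Set.mem_Ioi.mp hl
    have hl0 : (l : ℂ) ≠ 0 := by exact_mod_cast ne_of_gt hlpos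
    have hu1 : ‖u‖ = 1 := abs_eq_one hu
    have hv1 : ‖v‖ = 1 := abs_eq_one hv
    have hu0 : u ≠ 0 := by intro h; simp [h] at hu1
    have hprod : ((l : ℂ) * u) * ((l : ℂ) * v) *
        ((l : ℂ) * ((starRingEnd ℂ) u * (starRingEnd ℂ) v)) = ((l ^ 3 : ℝ) : ℂ) := by
      have h1 : u * (starRingEnd ℂ) u = ((‖u‖ ^ 2 : ℝ) : ℂ) := by
        rw [Complex.mul_conj, Complex.normSq_eq_norm_sq]
      have h2 : v * (starRingEnd ℂ) v = ((‖v‖ ^ 2 : ℝ) : ℂ) := by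
        rw [Complex.mul_conj, Complex.normSq_eq_norm_sq]
      calc ((l : ℂ) * u) * ((l : ℂ) * v) *
          ((l : ℂ) * ((starRingEnd ℂ) u * (starRingEnd ℂ) v))
          = (l : ℂ) ^ 3 * (u * (starRingEnd ℂ) u) * (v * (starRingEnd ℂ) v) := by ring
        _ = ((l ^ 3 : ℝ) : ℂ) := by rw [h1, h2, hu1, hv1]; push_cast; ring
    refine ⟨?_, ?_, ?_, ?_, ?_⟩
    · simp only [coneMap, ne_eq, Prod.mk_eq_zero, not_and]
      intro h; exact absurd h (mul_ne_zero hl0 hu0)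
    · simp [coneMap, map_mul, hu1, hv1]
    · simp [coneMap, map_mul, hu1, hv1, Complex.norm_conj]
    · show (((l : ℂ) * u) * ((l : ℂ) * v) *
        ((l : ℂ) * ((starRingEnd ℂ) u * (starRingEnd ℂ) v))).im = 0
      rw [hprod, Complex.ofReal_im]
    · show 0 < (((l : ℂ) * u) * ((l : ℂ) * v) *
        ((l : ℂ) * ((starRingEnd ℂ) u * (starRingEnd ℂ) v))).re
      rw [hprod, Complex.ofReal_re]; positivity
  · rintro ⟨hz0, h12, h23, him, hre⟩
    have hz1 : z.1 ≠ 0 := by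
      intro h; rw [h] at hre; simp at hre
    have hz2 : z.2.1 ≠ 0 := by
      intro h; rw [h] at hre; simp at hre
    set l : ℝ := ‖z.1‖ with hldef
    have hlpos : 0 < l := norm_pos_iff.mpr hz1
    have hl0 : (l : ℂ) ≠ 0 := by exact_mod_cast ne_of_gt hlpos
    have habs2 : ‖z.2.1‖ = l := h12.symm
    have habs3 : ‖z.2.2‖ = l := by rw [← h23, habs2]
    -- the product equals l^3
    have hwre : z.1 * z.2.1 * z.2.2 = (((z.1 * z.2.1 * z.2.2).re : ℝ) : ℂ) := by
      apply Complex.ext <;> simp [him]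
    have habsw : ‖z.1 * z.2.1 * z.2.2‖ = l ^ 3 := by
      rw [norm_mul, norm_mul, habs2, habs3, ← hldef]; ring
    have key : z.1 * z.2.1 * z.2.2 = ((l ^ 3 : ℝ) : ℂ) := by
      rw [hwre]
      congr 1
      have := habsw
      rw [hwre, Complex.norm_real, Real.norm_eq_abs, abs_of_pos hre] at this
      exact this
    refine ⟨(⟨l, hlpos⟩, ⟨(l : ℂ)⁻¹ * z.1, mem_sphere_div hz1⟩,
      ⟨(l : ℂ)⁻¹ * z.2.1, by rw [← habs2]; exact mem_sphere_div hz2⟩), ?_⟩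
    simp only [coneMap]
    have e1 : (l : ℂ) * ((l : ℂ)⁻¹ * z.1) = z.1 := by field_simp
    have e2 : (l : ℂ) * ((l : ℂ)⁻¹ * z.2.1) = z.2.1 := by field_simp
    have e3 : (l : ℂ) * ((starRingEnd ℂ) ((l : ℂ)⁻¹ * z.1) *
        (starRingEnd ℂ) ((l : ℂ)⁻¹ * z.2.1)) = z.2.2 := by
      rw [map_mul, map_mul, map_inv₀, Complex.conj_ofReal]
      apply mul_left_cancel₀ (mul_ne_zero hz1 hz2)
      have h1 : z.1 * (starRingEnd ℂ) z.1 = ((l : ℂ)) ^ 2 := by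
        rw [Complex.mul_conj, Complex.normSq_eq_norm_sq, ← hldef]; push_cast; ring
      have h2 : z.2.1 * (starRingEnd ℂ) z.2.1 = ((l : ℂ)) ^ 2 := by
        rw [Complex.mul_conj, Complex.normSq_eq_norm_sq, habs2]; push_cast; ring
      calc z.1 * z.2.1 * ((l : ℂ) * ((l : ℂ)⁻¹ * (starRingEnd ℂ) z.1 *
            ((l : ℂ)⁻¹ * (starRingEnd ℂ) z.2.1)))
          = (l : ℂ)⁻¹ * ((z.1 * (starRingEnd ℂ) z.1) * (z.2.1 * (starRingEnd ℂ) z.2.1)) := by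
            field_simp
        _ = (l : ℂ)⁻¹ * ((l : ℂ) ^ 2 * (l : ℂ) ^ 2) := by rw [h1, h2]
        _ = z.1 * z.2.1 * z.2.2 := by rw [key]; push_cast; field_simp
    rw [e1, e2, e3]

lemma connected_domain : IsConnected HLcone := by
  haveI : ConnectedSpace ↥(Set.Ioi (0 : ℝ)) :=
    Subtype.connectedSpace (isConnected_Ioi)
  haveI : ConnectedSpace ↥(Metric.sphere (0 : ℂ) 1) :=
    Subtype.connectedSpace (isConnected_sphere (by rw [Complex.rank_real_complex]; exact_mod_cast (by norm_num : (1:ℕ) < 2)) 0 zero_le_one)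
  rw [← range_eq]
  exact isConnected_range continuous_coneMap

lemma smul_mem {t : ℝ} (ht : 0 < t) {z : ℂ × ℂ × ℂ} (hz : z ∈ HLcone) :
    (((t : ℝ) : ℂ) * z.1, ((t : ℝ) : ℂ) * z.2.1, ((t : ℝ) : ℂ) * z.2.2) ∈ HLcone := by
  obtain ⟨hz0, h12, h23, him, hre⟩ := hz
  have ht0 : (t : ℂ) ≠ 0 := by exact_mod_cast ne_of_gt ht
  have hz1 : z.1 ≠ 0 := by intro h; rw [h] at hre; simp at hre
  have hprod : ((t : ℂ) * z.1) * ((t : ℂ) * z.2.1) * ((t : ℂ) * z.2.2)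
      = ((t ^ 3 : ℝ) : ℂ) * (z.1 * z.2.1 * z.2.2) := by push_cast; ring
  refine ⟨?_, ?_, ?_, ?_, ?_⟩
  · simp only [ne_eq, Prod.mk_eq_zero, not_and]
    intro h; exact absurd h (mul_ne_zero ht0 hz1)
  · simp [map_mul, h12]
  · simp [map_mul, h23]
  · show (((t : ℂ) * z.1) * ((t : ℂ) * z.2.1) * ((t : ℂ) * z.2.2)).im = 0
    rw [hprod, Complex.mul_im, Complex.ofReal_re, Complex.ofReal_im, him]
    ring
  · show 0 < (((t : ℂ) * z.1) * ((t : ℂ) * z.2.1) * ((t : ℂ) * z.2.2)).re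
    rw [hprod, Complex.mul_re, Complex.ofReal_re, Complex.ofReal_im, him]
    simp only [zero_mul, mul_zero, sub_zero]
    exact mul_pos (pow_pos ht 3) hre

lemma scaling (t : ℝ) (ht : 0 < t) :
    (fun z : ℂ × ℂ × ℂ => (((t : ℝ) : ℂ) * z.1, ((t : ℝ) : ℂ) * z.2.1,
      ((t : ℝ) : ℂ) * z.2.2)) '' HLcone = HLcone := by
  have ht0 : (t : ℂ) ≠ 0 := by exact_mod_cast ne_of_gt ht
  apply Set.Subset.antisymm
  · rintro _ ⟨z, hz, rfl⟩
    exact smul_mem ht hz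
  · intro z hz
    refine ⟨(((t⁻¹ : ℝ) : ℂ) * z.1, ((t⁻¹ : ℝ) : ℂ) * z.2.1, ((t⁻¹ : ℝ) : ℂ) * z.2.2),
      smul_mem (inv_pos.mpr ht) hz, ?_⟩
    have : ∀ w : ℂ, (t : ℂ) * (((t⁻¹ : ℝ) : ℂ) * w) = w := by
      intro w; push_cast; field_simp
    simp only [this]

end ConeAux

/-- The map `(λ,u,v) ↦ (λu, λv, λ·ū·v̄)` is a homeomorphism from
`(0,∞) × S¹ × S¹` onto the cone `C`; in particular `C` is connected, and `C` is
invariant under scaling: `t·C = C` for every `t > 0`. -/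
theorem cone_parametrization :
    Topology.IsEmbedding coneMap ∧ Set.range coneMap = HLcone ∧
    IsConnected HLcone ∧
    ∀ t : ℝ, 0 < t →
      (fun z : ℂ × ℂ × ℂ => (((t : ℝ) : ℂ) * z.1, ((t : ℝ) : ℂ) * z.2.1,
        ((t : ℝ) : ℂ) * z.2.2)) '' HLcone = HLcone :=
  ⟨ConeAux.isEmbedding_coneMap, ConeAux.range_eq, ConeAux.connected_domain,
    fun t ht => ConeAux.scaling t ht⟩
end

section
/- Let Y = {(a,0,0) : a ≥ 0} ∪ {(0,a,0) : a ≥ 0} ∪ {(−a,−a,0) : a ≥ 0} ⊆ ℝ³, let c ∈ Y, and let ε > 0. Then both sets F⁻¹(c) ∩ {z ∈ ℂ³ : Re(z₁z₂z₃) > ε} and F⁻¹(c) ∩ {z ∈ ℂ³ : Re(z₁z₂z₃) < −ε} are connected subsets of ℂ³. -/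
open Complex

/-- The set `Y ⊆ ℝ³` of critical values. -/
def Ycrit : Set (ℝ × ℝ × ℝ) :=
  {p | ∃ a : ℝ, 0 ≤ a ∧ p = (a, 0, 0)} ∪ {p | ∃ a : ℝ, 0 ≤ a ∧ p = (0, a, 0)} ∪
    {p | ∃ a : ℝ, 0 ≤ a ∧ p = (-a, -a, 0)}

noncomputable def HLm (c₁ c₂ : ℝ) : ℝ := max 0 (max (-c₁) (-c₂))

noncomputable def HLq (c₁ c₂ s : ℝ) : ℝ := HLm c₁ c₂ + Real.exp (2 * s)

noncomputable def HLt (c₁ c₂ s : ℝ) : ℝ :=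
  Real.sqrt ((HLq c₁ c₂ s + c₁) * ((HLq c₁ c₂ s + c₂) * HLq c₁ c₂ s))

lemma HLm_nonneg (c₁ c₂ : ℝ) : 0 ≤ HLm c₁ c₂ := le_max_left _ _

lemma HLm_add₁ (c₁ c₂ : ℝ) : 0 ≤ HLm c₁ c₂ + c₁ := by
  have h1 : -c₁ ≤ max (-c₁) (-c₂) := le_max_left _ _
  have h2 : max (-c₁) (-c₂) ≤ HLm c₁ c₂ := le_max_right _ _
  linarith

lemma HLm_add₂ (c₁ c₂ : ℝ) : 0 ≤ HLm c₁ c₂ + c₂ := by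
  have h1 : -c₂ ≤ max (-c₁) (-c₂) := le_max_right _ _
  have h2 : max (-c₁) (-c₂) ≤ HLm c₁ c₂ := le_max_right _ _
  linarith

lemma HLq_pos (c₁ c₂ s : ℝ) : 0 < HLq c₁ c₂ s := by
  have := Real.exp_pos (2 * s); have := HLm_nonneg c₁ c₂; unfold HLq; linarith

lemma HLq_add₁_pos (c₁ c₂ s : ℝ) : 0 < HLq c₁ c₂ s + c₁ := by
  have := Real.exp_pos (2 * s); have := HLm_add₁ c₁ c₂; unfold HLq; linarith

lemma HLq_add₂_pos (c₁ c₂ s : ℝ) : 0 < HLq c₁ c₂ s + c₂ := by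
  have := Real.exp_pos (2 * s); have := HLm_add₂ c₁ c₂; unfold HLq; linarith

lemma HLt_strictMono (c₁ c₂ : ℝ) : StrictMono (HLt c₁ c₂) := by
  intro a b hab
  have hq : HLq c₁ c₂ a < HLq c₁ c₂ b := by
    unfold HLq
    have : Real.exp (2 * a) < Real.exp (2 * b) := Real.exp_lt_exp.2 (by linarith)
    linarith
  have h1 := HLq_add₁_pos c₁ c₂ a
  have h2 := HLq_add₂_pos c₁ c₂ a
  have h3 := HLq_pos c₁ c₂ a
  unfold HLt
  apply Real.sqrt_lt_sqrt (by positivity)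
  apply mul_lt_mul'' (by linarith) _ h1.le (by positivity)
  exact mul_lt_mul'' (by linarith) hq h2.le h3.le

/-- the parametrization of the fiber piece -/
noncomputable def HLΦ (c₁ c₂ η : ℝ) (p : ℝ × ℝ × ℝ) : ℂ × ℂ × ℂ :=
  ((η * Real.sqrt (HLq c₁ c₂ p.2.2 + c₁) : ℝ) * Complex.exp ((-(p.1 + p.2.1) : ℝ) * I),
   (Real.sqrt (HLq c₁ c₂ p.2.2 + c₂) : ℝ) * Complex.exp ((p.1 : ℝ) * I),
   (Real.sqrt (HLq c₁ c₂ p.2.2) : ℝ) * Complex.exp ((p.2.1 : ℝ) * I))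

lemma normSq_polar (r x : ℝ) : normSq ((r : ℂ) * Complex.exp ((x : ℝ) * I)) = r ^ 2 := by
  rw [normSq_eq_norm_sq, norm_mul, norm_exp_ofReal_mul_I, Complex.norm_real]
  simp [sq_abs]

lemma HLΦ_prod (c₁ c₂ η : ℝ) (p : ℝ × ℝ × ℝ) :
    (HLΦ c₁ c₂ η p).1 * (HLΦ c₁ c₂ η p).2.1 * (HLΦ c₁ c₂ η p).2.2
      = ((η * HLt c₁ c₂ p.2.2 : ℝ) : ℂ) := by
  obtain ⟨θ₂, θ₃, s⟩ := p
  have hexp : Complex.exp (-((θ₂ : ℂ) + (θ₃ : ℂ)) * I) * Complex.exp ((θ₂ : ℂ) * I) *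
      Complex.exp ((θ₃ : ℂ) * I) = 1 := by
    rw [← Complex.exp_add, ← Complex.exp_add, ← Complex.exp_zero]
    congr 1
    push_cast
    ring
  have hs : Real.sqrt (HLq c₁ c₂ s + c₁) * (Real.sqrt (HLq c₁ c₂ s + c₂) *
      Real.sqrt (HLq c₁ c₂ s)) = HLt c₁ c₂ s := by
    rw [HLt, Real.sqrt_mul (HLq_add₁_pos c₁ c₂ s).le, Real.sqrt_mul (HLq_add₂_pos c₁ c₂ s).le]
  simp only [HLΦ]
  push_cast
  rw [← hs]
  calc (η : ℂ) * (Real.sqrt (HLq c₁ c₂ s + c₁) : ℂ) * Complex.exp (-((θ₂ : ℂ) + (θ₃ : ℂ)) * I) *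
        ((Real.sqrt (HLq c₁ c₂ s + c₂) : ℂ) * Complex.exp ((θ₂ : ℂ) * I)) *
        ((Real.sqrt (HLq c₁ c₂ s) : ℂ) * Complex.exp ((θ₃ : ℂ) * I))
      = (η : ℂ) * ((Real.sqrt (HLq c₁ c₂ s + c₁) : ℂ) * ((Real.sqrt (HLq c₁ c₂ s + c₂) : ℂ) *
        (Real.sqrt (HLq c₁ c₂ s) : ℂ))) * (Complex.exp (-((θ₂ : ℂ) + (θ₃ : ℂ)) * I) *
        Complex.exp ((θ₂ : ℂ) * I) * Complex.exp ((θ₃ : ℂ) * I)) := by push_cast; ring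
    _ = _ := by rw [hexp]; push_cast; ring

lemma HLΦ_continuous (c₁ c₂ η : ℝ) : Continuous (HLΦ c₁ c₂ η) := by
  unfold HLΦ HLq
  fun_prop

lemma HLpiece (c₁ c₂ ε η : ℝ) (hε : 0 < ε) (hη : η = 1 ∨ η = -1) :
    IsConnected (HLfib ⁻¹' {(c₁, c₂, 0)} ∩
      {z : ℂ × ℂ × ℂ | ε < η * (z.1 * z.2.1 * z.2.2).re}) := by
  have hη2 : η * η = 1 := by rcases hη with rfl | rfl <;> norm_num
  -- the parameter domain
  set Iset : Set ℝ := {s | ε < HLt c₁ c₂ s} with hIset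
  set D : Set (ℝ × ℝ × ℝ) := Set.univ ×ˢ Set.univ ×ˢ Iset with hD
  -- the domain is connected
  have hIne : Iset.Nonempty := by
    set s : ℝ := |Real.log ε| + 1 with hs
    refine ⟨s, ?_⟩
    have h1 : ε < Real.exp (3 * s) := by
      have h2 : Real.log ε < s := by
        have := abs_nonneg (Real.log ε); have := le_abs_self (Real.log ε); linarith
      calc ε = Real.exp (Real.log ε) := (Real.exp_log hε).symm
        _ < Real.exp (3 * s) := by
          apply Real.exp_lt_exp.2
          have := abs_nonneg (Real.log ε); linarith
    have h4 : Real.exp (3 * s) ≤ HLt c₁ c₂ s := by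
      have hm := HLm_nonneg c₁ c₂
      have hm1 := HLm_add₁ c₁ c₂
      have hm2 := HLm_add₂ c₁ c₂
      have he : Real.exp (2 * s) ≤ HLq c₁ c₂ s := by unfold HLq; linarith
      have he1 : Real.exp (2 * s) ≤ HLq c₁ c₂ s + c₁ := by unfold HLq; linarith
      have he2 : Real.exp (2 * s) ≤ HLq c₁ c₂ s + c₂ := by unfold HLq; linarith
      have hep := Real.exp_pos (2 * s)
      have key : Real.exp (3 * s) ^ 2 ≤
          (HLq c₁ c₂ s + c₁) * ((HLq c₁ c₂ s + c₂) * HLq c₁ c₂ s) := by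
        have hee : Real.exp (3 * s) ^ 2
            = Real.exp (2 * s) * (Real.exp (2 * s) * Real.exp (2 * s)) := by
          rw [sq, ← Real.exp_add, ← Real.exp_add, ← Real.exp_add]; ring_nf
        rw [hee]
        have hq := HLq_pos c₁ c₂ s
        have hbc : Real.exp (2 * s) * Real.exp (2 * s) ≤
            (HLq c₁ c₂ s + c₂) * HLq c₁ c₂ s :=
          mul_le_mul he2 he hep.le (by linarith)
        exact mul_le_mul he1 hbc (by positivity) (by linarith)
      calc Real.exp (3 * s) = Real.sqrt (Real.exp (3 * s) ^ 2) :=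
            (Real.sqrt_sq (Real.exp_pos _).le).symm
        _ ≤ HLt c₁ c₂ s := Real.sqrt_le_sqrt key
    exact lt_of_lt_of_le h1 h4
  have hIconn : IsPreconnected Iset := by
    apply Set.OrdConnected.isPreconnected
    constructor
    intro x hx y _ w hw
    have : HLt c₁ c₂ x ≤ HLt c₁ c₂ w := (HLt_strictMono c₁ c₂).monotone hw.1
    exact lt_of_lt_of_le hx this
  have hDconn : IsConnected D := by
    refine ⟨?_, ?_⟩
    · obtain ⟨s, hs⟩ := hIne
      exact ⟨(0, 0, s), by simp [hD, Set.mem_prod]; exact hs⟩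
    · exact isPreconnected_univ.prod (isPreconnected_univ.prod hIconn)
  -- the image is the desired set
  have himage : HLΦ c₁ c₂ η '' D =
      HLfib ⁻¹' {(c₁, c₂, 0)} ∩ {z : ℂ × ℂ × ℂ | ε < η * (z.1 * z.2.1 * z.2.2).re} := by
    apply Set.Subset.antisymm
    · rintro _ ⟨⟨θ₂, θ₃, s⟩, hp, rfl⟩
      have hs : ε < HLt c₁ c₂ s := hp.2.2
      have hq1 := (HLq_add₁_pos c₁ c₂ s).le
      have hq2 := (HLq_add₂_pos c₁ c₂ s).le
      have hq := (HLq_pos c₁ c₂ s).le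
      constructor
      · show HLfib (HLΦ c₁ c₂ η (θ₂, θ₃, s)) = (c₁, c₂, 0)
        have hprod := HLΦ_prod c₁ c₂ η (θ₂, θ₃, s)
        refine Prod.ext ?_ (Prod.ext ?_ ?_)
        · show normSq (HLΦ c₁ c₂ η (θ₂, θ₃, s)).1 -
            normSq (HLΦ c₁ c₂ η (θ₂, θ₃, s)).2.2 = c₁
          simp only [HLΦ, normSq_polar]
          rw [mul_pow, Real.sq_sqrt hq1, Real.sq_sqrt hq]
          nlinarith
        · show normSq (HLΦ c₁ c₂ η (θ₂, θ₃, s)).2.1 -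
            normSq (HLΦ c₁ c₂ η (θ₂, θ₃, s)).2.2 = c₂
          simp only [HLΦ, normSq_polar]
          rw [Real.sq_sqrt hq2, Real.sq_sqrt hq]
          ring
        · show ((HLΦ c₁ c₂ η (θ₂, θ₃, s)).1 * (HLΦ c₁ c₂ η (θ₂, θ₃, s)).2.1 *
            (HLΦ c₁ c₂ η (θ₂, θ₃, s)).2.2).im = 0
          rw [hprod]
          exact ofReal_im _
      · show ε < η * ((HLΦ c₁ c₂ η (θ₂, θ₃, s)).1 * (HLΦ c₁ c₂ η (θ₂, θ₃, s)).2.1 *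
          (HLΦ c₁ c₂ η (θ₂, θ₃, s)).2.2).re
        rw [HLΦ_prod c₁ c₂ η (θ₂, θ₃, s), ofReal_re]
        calc ε < HLt c₁ c₂ s := hs
          _ = η * (η * HLt c₁ c₂ s) := by rw [← mul_assoc, hη2, one_mul]
    · rintro z ⟨hz1, hz2⟩
      have hfib : HLfib z = (c₁, c₂, 0) := hz1
      have h1 : normSq z.1 - normSq z.2.2 = c₁ := congrArg Prod.fst hfib
      have h2 : normSq z.2.1 - normSq z.2.2 = c₂ := congrArg (fun p => p.2.1) hfib
      have h3 : (z.1 * z.2.1 * z.2.2).im = 0 := congrArg (fun p => p.2.2) hfib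
      have hre : ε < η * (z.1 * z.2.1 * z.2.2).re := hz2
      have hRe_ne : (z.1 * z.2.1 * z.2.2).re ≠ 0 := by
        rcases hη with rfl | rfl <;> intro h <;> rw [h] at hre <;> simp at hre <;> linarith
      have hz1ne : z.1 ≠ 0 := by intro h; apply hRe_ne; simp [h]
      have hz2ne : z.2.1 ≠ 0 := by intro h; apply hRe_ne; simp [h]
      have hz3ne : z.2.2 ≠ 0 := by intro h; apply hRe_ne; simp [h]
      have hn1 : 0 < normSq z.1 := normSq_pos.2 hz1ne
      have hn2 : 0 < normSq z.2.1 := normSq_pos.2 hz2ne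
      have hn3 : 0 < normSq z.2.2 := normSq_pos.2 hz3ne
      have hm : HLm c₁ c₂ < normSq z.2.2 := by
        have hmax : max (-c₁) (-c₂) < normSq z.2.2 := max_lt (by linarith) (by linarith)
        exact max_lt hn3 hmax
      set s : ℝ := Real.log (normSq z.2.2 - HLm c₁ c₂) / 2 with hsdef
      have hqs : HLq c₁ c₂ s = normSq z.2.2 := by
        rw [HLq, hsdef, show 2 * (Real.log (normSq z.2.2 - HLm c₁ c₂) / 2) =
          Real.log (normSq z.2.2 - HLm c₁ c₂) by ring, Real.exp_log (by linarith)]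
        ring
      have hq1 : HLq c₁ c₂ s + c₁ = normSq z.1 := by rw [hqs]; linarith
      have hq2 : HLq c₁ c₂ s + c₂ = normSq z.2.1 := by rw [hqs]; linarith
      have habs1 : Real.sqrt (HLq c₁ c₂ s + c₁) = ‖z.1‖ := by
        rw [hq1, ← Complex.norm_def]
      have habs2 : Real.sqrt (HLq c₁ c₂ s + c₂) = ‖z.2.1‖ := by
        rw [hq2, ← Complex.norm_def]
      have habs3 : Real.sqrt (HLq c₁ c₂ s) = ‖z.2.2‖ := by
        rw [hqs, ← Complex.norm_def]
      have habsP : ‖z.1 * z.2.1 * z.2.2‖ = η * (z.1 * z.2.1 * z.2.2).re := by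
        have him : ‖z.1 * z.2.1 * z.2.2‖ = |(z.1 * z.2.1 * z.2.2).re| := by
          rw [Complex.norm_def, normSq_apply, h3]
          rw [show (z.1 * z.2.1 * z.2.2).re * (z.1 * z.2.1 * z.2.2).re + 0 * 0 =
            (z.1 * z.2.1 * z.2.2).re ^ 2 by ring, Real.sqrt_sq_eq_abs]
        rcases hη with rfl | rfl
        · rw [him, abs_of_pos (by linarith), one_mul]
        · rw [him, abs_of_neg (by nlinarith), neg_one_mul]
      have ht : HLt c₁ c₂ s = η * (z.1 * z.2.1 * z.2.2).re := by
        rw [HLt, hq1, hq2, hqs, Real.sqrt_mul hn1.le, Real.sqrt_mul hn2.le]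
        rw [← Complex.norm_def, ← Complex.norm_def, ← Complex.norm_def]
        rw [← norm_mul, ← norm_mul, ← mul_assoc, habsP]
      set θ₂ : ℝ := z.2.1.arg with hθ₂
      set θ₃ : ℝ := z.2.2.arg with hθ₃
      refine ⟨(θ₂, θ₃, s), ?_, ?_⟩
      · refine ⟨Set.mem_univ _, Set.mem_univ _, ?_⟩
        show ε < HLt c₁ c₂ s
        rw [ht]; exact hre
      · have e2 : ((Real.sqrt (HLq c₁ c₂ s + c₂) : ℝ) : ℂ) *
            Complex.exp ((θ₂ : ℝ) * I) = z.2.1 := by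
          rw [habs2, hθ₂]; exact Complex.norm_mul_exp_arg_mul_I z.2.1
        have e3 : ((Real.sqrt (HLq c₁ c₂ s) : ℝ) : ℂ) *
            Complex.exp ((θ₃ : ℝ) * I) = z.2.2 := by
          rw [habs3, hθ₃]; exact Complex.norm_mul_exp_arg_mul_I z.2.2
        have hzz : z.2.1 * z.2.2 ≠ 0 := mul_ne_zero hz2ne hz3ne
        have e1 : ((η * Real.sqrt (HLq c₁ c₂ s + c₁) : ℝ) : ℂ) *
            Complex.exp ((-(θ₂ + θ₃) : ℝ) * I) = z.1 := by
          apply mul_right_cancel₀ hzz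
          have hPeq : z.1 * (z.2.1 * z.2.2) = (((z.1 * z.2.1 * z.2.2).re : ℝ) : ℂ) := by
            rw [← mul_assoc]
            apply Complex.ext
            · simp
            · simp [h3]
          rw [hPeq]
          conv_lhs => rw [← e2, ← e3]
          have hexp : Complex.exp ((-(θ₂ + θ₃) : ℝ) * I) *
              (Complex.exp ((θ₂ : ℝ) * I) * Complex.exp ((θ₃ : ℝ) * I)) = 1 := by
            rw [← Complex.exp_add, ← Complex.exp_add, ← Complex.exp_zero]
            congr 1
            push_cast
            ring
          calc ((η * Real.sqrt (HLq c₁ c₂ s + c₁) : ℝ) : ℂ) *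
                Complex.exp ((-(θ₂ + θ₃) : ℝ) * I) *
                (((Real.sqrt (HLq c₁ c₂ s + c₂) : ℝ) : ℂ) * Complex.exp ((θ₂ : ℝ) * I) *
                (((Real.sqrt (HLq c₁ c₂ s) : ℝ) : ℂ) * Complex.exp ((θ₃ : ℝ) * I)))
              = ((η * (Real.sqrt (HLq c₁ c₂ s + c₁) * (Real.sqrt (HLq c₁ c₂ s + c₂) *
                Real.sqrt (HLq c₁ c₂ s))) : ℝ) : ℂ) *
                (Complex.exp ((-(θ₂ + θ₃) : ℝ) * I) *
                (Complex.exp ((θ₂ : ℝ) * I) * Complex.exp ((θ₃ : ℝ) * I))) := by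
                push_cast; ring
            _ = _ := by
                rw [hexp, mul_one]
                congr 1
                rw [habs1, habs2, habs3, ← norm_mul, ← norm_mul, ← mul_assoc, habsP]
                rcases hη with rfl | rfl <;> ring
        exact Prod.ext e1 (Prod.ext e2 e3)
  rw [← himage]
  exact hDconn.image _ (HLΦ_continuous c₁ c₂ η).continuousOn

/-- For `c ∈ Y` and `ε > 0`, both
`F⁻¹(c) ∩ {Re(z₁z₂z₃) > ε}` and `F⁻¹(c) ∩ {Re(z₁z₂z₃) < −ε}` are connected
subsets of `ℂ³`. -/
theorem fibre_pieces_connected (c : ℝ × ℝ × ℝ) (hc : c ∈ Ycrit) (ε : ℝ) (hε : 0 < ε) :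
    IsConnected (HLfib ⁻¹' {c} ∩ {z : ℂ × ℂ × ℂ | ε < (z.1 * z.2.1 * z.2.2).re}) ∧
    IsConnected (HLfib ⁻¹' {c} ∩ {z : ℂ × ℂ × ℂ | (z.1 * z.2.1 * z.2.2).re < -ε}) := by
  have hc0 : c = (c.1, c.2.1, 0) := by
    rcases hc with (⟨a, _, rfl⟩ | ⟨a, _, rfl⟩) | ⟨a, _, rfl⟩ <;> rfl
  constructor
  · have h := HLpiece c.1 c.2.1 ε 1 hε (Or.inl rfl)
    rw [← hc0] at h
    have hset : {z : ℂ × ℂ × ℂ | ε < (z.1 * z.2.1 * z.2.2).re} =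
        {z : ℂ × ℂ × ℂ | ε < 1 * (z.1 * z.2.1 * z.2.2).re} := by
      ext w; simp
    rw [hset]
    exact h
  · have h := HLpiece c.1 c.2.1 ε (-1) hε (Or.inr rfl)
    rw [← hc0] at h
    have hset : {z : ℂ × ℂ × ℂ | (z.1 * z.2.1 * z.2.2).re < -ε} =
        {z : ℂ × ℂ × ℂ | ε < (-1) * (z.1 * z.2.1 * z.2.2).re} := by
      ext w
      simp only [Set.mem_setOf_eq]
      constructor <;> intro <;> linarith
    rw [hset]
    exact h
end
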